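/- arXiv:math/0607695 — 4 statements merged into one kernel-verified Lean document; each statement's English description precedes it below -/
import Mathlib

section
/- Let ψ be a wavelet of L²(ℝ) and for j ∈ ℤ define V_j to be the closed linear span of {ψ_{l,k} : l < j, k ∈ ℤ}. Then: (i) V_j ⊆ V_{j+1} for all j ∈ ℤ; (ii) for all j ∈ ℤ, f ∈ V_j if and only if the function x ↦ f(2x) belongs to V_{j+1}; (iii) ∪_{j∈ℤ} V_j is dense in L²(ℝ); (iv) ∩_{j∈ℤ} V_j = {0}; and (v′) V_0 is invariant under translation by every integer, i.e., T_m(V_0) ⊆ V_0 for all m ∈ ℤ. -/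
open MeasureTheory Real Set
open scoped Classical

noncomputable section

/-- The dilated-translated family `ψ_{j,k}(x) = 2^(j/2) ψ(2^j x - k)`. -/
def wavDT (ψ : ℝ → ℂ) (j k : ℤ) : ℝ → ℂ := fun x =>
  (((2 : ℝ) ^ ((j : ℝ) / 2) : ℝ) : ℂ) * ψ ((2 : ℝ) ^ j * x - (k : ℝ))

/-- `ψ` is an (orthonormal) wavelet of `L²(ℝ)`: the family `ψ_{j,k}`, realized as
elements of `L²(ℝ)`, is an orthonormal basis. -/
def IsWavelet (ψ : ℝ → ℂ) : Prop :=
  MemLp ψ 2 (volume : Measure ℝ) ∧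
  ∃ Ψ : ℤ × ℤ → Lp ℂ 2 (volume : Measure ℝ),
    (∀ p : ℤ × ℤ, (Ψ p : ℝ → ℂ) =ᵐ[(volume : Measure ℝ)] wavDT ψ p.1 p.2) ∧
    Orthonormal ℂ Ψ ∧
    ⊤ ≤ (Submodule.span ℂ (Set.range Ψ)).topologicalClosure

/-- The space `V_j`: closed linear span of `{ψ_{l,k} : l < j, k ∈ ℤ}` in `L²(ℝ)`. -/
def Vspace (ψ : ℝ → ℂ) (j : ℤ) : Submodule ℂ (Lp ℂ 2 (volume : Measure ℝ)) :=
  (Submodule.span ℂ {f : Lp ℂ 2 (volume : Measure ℝ) |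
    ∃ l k : ℤ, l < j ∧ (f : ℝ → ℂ) =ᵐ[(volume : Measure ℝ)] wavDT ψ l k}).topologicalClosure

/-- `T_α(V) ⊆ V` : the translation by `α` of every element of `V` is (a.e. equal to)
an element of `V`. -/
def TransInv (V : Submodule ℂ (Lp ℂ 2 (volume : Measure ℝ))) (α : ℝ) : Prop :=
  ∀ f ∈ V, ∃ g ∈ V, (g : ℝ → ℂ) =ᵐ[(volume : Measure ℝ)] fun x => f (x - α)

/-- `ψh` is the `L²`-Fourier transform (with normalization `ψ̂(ξ) = ∫ ψ(x) e^{-iξx} dx`,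
extended to `L²` by Plancherel) of `ψ`, characterized by the multiplication formula
`∫ ψ ĝ = ∫ ψ̂ g` for all `g ∈ L¹ ∩ L²`. -/
def IsL2FourierPair (ψ ψh : ℝ → ℂ) : Prop :=
  MemLp ψ 2 (volume : Measure ℝ) ∧ MemLp ψh 2 (volume : Measure ℝ) ∧
  ∀ g : ℝ → ℂ, Integrable g (volume : Measure ℝ) → MemLp g 2 (volume : Measure ℝ) →
    ∫ x : ℝ, ψ x * (∫ ξ : ℝ, g ξ * Complex.exp (-(Complex.I * (x : ℂ) * (ξ : ℂ)))) =
    ∫ ξ : ℝ, ψh ξ * g ξ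

/-- `𝓔(ψ) = {k ∈ ℤ : supp ψ̂ ∩ (supp ψ̂ + 2kπ) has positive measure}`, in terms of
a representative `ψh` of the Fourier transform of `ψ`. -/
def specE (ψh : ℝ → ℂ) : Set ℤ :=
  {k : ℤ | 0 < volume {ξ : ℝ | ψh ξ ≠ 0 ∧ ψh (ξ - 2 * (k : ℝ) * π) ≠ 0}}

def aN (n : ℕ) : ℝ := 2 ^ (n - 1) * π / (2 ^ n - 1)
def bN (n : ℕ) : ℝ := 2 * aN n
def cN (n : ℕ) : ℝ := 2 ^ (n - 1) * (2 ^ n - 2) * π / (2 ^ n - 1)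
def dN (n : ℕ) : ℝ := 2 ^ n * aN n
def eN (n : ℕ) : ℝ := (2 ^ n - 2) * π / (2 ^ n - 1)

/-- `S_n = S_n⁺ ∪ (−S_n⁺)`, where `S_n⁺ = [a_n,b_n] ∪ [c_n,d_n]`. -/
def Sset (n : ℕ) : Set ℝ :=
  (Icc (aN n) (bN n) ∪ Icc (cN n) (dN n)) ∪ (-(Icc (aN n) (bN n) ∪ Icc (cN n) (dN n)))

end

noncomputable section WavAux
open MeasureTheory
open scoped ENNReal

namespace WavAux

lemma mp_mul (a : ℝ) (ha : a ≠ 0) :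
    MeasurePreserving (fun x : ℝ => a * x) volume (ENNReal.ofReal |a⁻¹| • volume) :=
  ⟨measurable_const_mul a, Real.map_volume_mul_left ha⟩

lemma qmp_mul (a : ℝ) (ha : a ≠ 0) :
    Measure.QuasiMeasurePreserving (fun x : ℝ => a * x) volume volume :=
  ⟨measurable_const_mul a, by
    rw [(mp_mul a ha).map_eq]
    exact Measure.smul_absolutelyContinuous⟩

lemma memLp_dil {f : ℝ → ℂ} (hf : MemLp f 2 (volume : Measure ℝ)) (a : ℝ) (ha : a ≠ 0) :
    MemLp (fun x => f (a * x)) 2 (volume : Measure ℝ) :=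
  (hf.smul_measure ENNReal.ofReal_ne_top).comp_measurePreserving (mp_mul a ha)

lemma eLpNorm_dil {f : ℝ → ℂ} (hf : MemLp f 2 (volume : Measure ℝ)) (a : ℝ) (ha : a ≠ 0) :
    eLpNorm (fun x => f (a * x)) 2 (volume : Measure ℝ)
      = ENNReal.ofReal |a⁻¹| ^ ((1 : ℝ≥0∞) / 2).toReal * eLpNorm f 2 (volume : Measure ℝ) := by
  have h1 := eLpNorm_comp_measurePreserving (p := 2)
      (hf.smul_measure (c := ENNReal.ofReal |a⁻¹|) ENNReal.ofReal_ne_top).aestronglyMeasurable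
      (mp_mul a ha)
  rw [show (fun x => f (a * x)) = f ∘ (fun x : ℝ => a * x) from rfl, h1,
    eLpNorm_smul_measure_of_ne_top (by norm_num) f _, smul_eq_mul]

/-- Dilation `f ↦ f(a ·)` as a linear map on `L²(ℝ)`. -/
def dilL (a : ℝ) (ha : a ≠ 0) :
    Lp ℂ 2 (volume : Measure ℝ) →ₗ[ℂ] Lp ℂ 2 (volume : Measure ℝ) where
  toFun f := (memLp_dil (Lp.memLp f) a ha).toLp _
  map_add' f g := by
    apply Lp.ext
    filter_upwards [MemLp.coeFn_toLp (memLp_dil (Lp.memLp (f + g)) a ha),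
      (qmp_mul a ha).ae_eq_comp (Lp.coeFn_add f g),
      Lp.coeFn_add ((memLp_dil (Lp.memLp f) a ha).toLp _)
        ((memLp_dil (Lp.memLp g) a ha).toLp _),
      MemLp.coeFn_toLp (memLp_dil (Lp.memLp f) a ha),
      MemLp.coeFn_toLp (memLp_dil (Lp.memLp g) a ha)] with x h1 h2 h3 h4 h5
    simp only [Function.comp_apply, Pi.add_apply] at h1 h2 h3 h4 h5 ⊢
    rw [h1, h2, h3, h4, h5]
  map_smul' c f := by
    apply Lp.ext
    filter_upwards [MemLp.coeFn_toLp (memLp_dil (Lp.memLp (c • f)) a ha),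
      (qmp_mul a ha).ae_eq_comp (Lp.coeFn_smul c f),
      Lp.coeFn_smul c ((memLp_dil (Lp.memLp f) a ha).toLp _),
      MemLp.coeFn_toLp (memLp_dil (Lp.memLp f) a ha)] with x h1 h2 h3 h4
    simp only [Function.comp_apply, Pi.smul_apply, RingHom.id_apply] at h1 h2 h3 h4 ⊢
    rw [h1, h2, h3, h4]

lemma dilL_norm (a : ℝ) (ha : a ≠ 0) (f : Lp ℂ 2 (volume : Measure ℝ)) :
    ‖dilL a ha f‖ ≤ (ENNReal.ofReal |a⁻¹| ^ ((1 : ℝ≥0∞) / 2).toReal).toReal * ‖f‖ := by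
  have : dilL a ha f = (memLp_dil (Lp.memLp f) a ha).toLp _ := rfl
  rw [this, Lp.norm_toLp, eLpNorm_dil (Lp.memLp f) a ha, ENNReal.toReal_mul, Lp.norm_def]

/-- Dilation `f ↦ f(a ·)` as a continuous linear map on `L²(ℝ)`. -/
def dilCLM (a : ℝ) (ha : a ≠ 0) :
    Lp ℂ 2 (volume : Measure ℝ) →L[ℂ] Lp ℂ 2 (volume : Measure ℝ) :=
  (dilL a ha).mkContinuous _ (dilL_norm a ha)

lemma coeFn_dilCLM (a : ℝ) (ha : a ≠ 0) (f : Lp ℂ 2 (volume : Measure ℝ)) :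
    (dilCLM a ha f : ℝ → ℂ) =ᵐ[(volume : Measure ℝ)] fun x => f (a * x) := by
  have h : dilCLM a ha f = (memLp_dil (Lp.memLp f) a ha).toLp _ := rfl
  rw [h]
  exact MemLp.coeFn_toLp _

/-- Translation `f ↦ f(· - α)` as a linear isometry on `L²(ℝ)`. -/
def trLI (α : ℝ) :
    Lp ℂ 2 (volume : Measure ℝ) →ₗᵢ[ℂ] Lp ℂ 2 (volume : Measure ℝ) :=
  Lp.compMeasurePreservingₗᵢ ℂ (fun x : ℝ => x - α) (measurePreserving_sub_right volume α)

lemma coeFn_trLI (α : ℝ) (f : Lp ℂ 2 (volume : Measure ℝ)) :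
    (trLI α f : ℝ → ℂ) =ᵐ[(volume : Measure ℝ)] fun x => f (x - α) :=
  Lp.coeFn_compMeasurePreserving f _

lemma qmp_sub (α : ℝ) :
    Measure.QuasiMeasurePreserving (fun x : ℝ => x - α) volume volume :=
  (measurePreserving_sub_right volume α).quasiMeasurePreserving

end WavAux

end WavAux

set_option maxHeartbeats 1000000 in
/-- the spaces `V_j` associated with a wavelet form a GMRA:
(i) nested; (ii) `f ∈ V_j ↔ f(2·) ∈ V_{j+1}`; (iii) union dense; (iv) intersection
trivial; (v') `V_0` is invariant under integer translations. -/
theorem wavelet_GMRA (ψ : ℝ → ℂ) (hψ : IsWavelet ψ) :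
    (∀ j : ℤ, Vspace ψ j ≤ Vspace ψ (j + 1)) ∧
    (∀ j : ℤ, ∀ f g : Lp ℂ 2 (volume : Measure ℝ),
      ((g : ℝ → ℂ) =ᵐ[(volume : Measure ℝ)] fun x => f (2 * x)) →
      (f ∈ Vspace ψ j ↔ g ∈ Vspace ψ (j + 1))) ∧
    Dense (⋃ j : ℤ, (Vspace ψ j : Set (Lp ℂ 2 (volume : Measure ℝ)))) ∧
    (⨅ j : ℤ, Vspace ψ j) = ⊥ ∧
    (∀ m : ℤ, TransInv (Vspace ψ 0) (m : ℝ)) := by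
  obtain ⟨hψ2, Ψ, hae, hon, htot⟩ := hψ
  have htwo : (2 : ℝ) ≠ 0 := by norm_num
  have hhalf : (2⁻¹ : ℝ) ≠ 0 := by norm_num
  -- closedness of the spaces V_j
  have hclosed : ∀ j : ℤ, IsClosed ((Vspace ψ j : Set (Lp ℂ 2 (volume : Measure ℝ)))) :=
    fun j => Submodule.isClosed_topologicalClosure _
  -- the generators belong to V_j
  have hΨmem : ∀ (j : ℤ) (p : ℤ × ℤ), p.1 < j → Ψ p ∈ Vspace ψ j := by
    intro j p hp
    exact Submodule.le_topologicalClosure _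
      (Submodule.subset_span ⟨p.1, p.2, hp, hae p⟩)
  -- the Hilbert basis
  let b : HilbertBasis (ℤ × ℤ) ℂ (Lp ℂ 2 (volume : Measure ℝ)) := HilbertBasis.mk hon htot
  have hbc : ∀ p, b p = Ψ p := fun p => by
    show (HilbertBasis.mk hon htot) p = Ψ p
    rw [HilbertBasis.coe_mk]
  -- characterization of membership in V_j by vanishing of coefficients
  have memV : ∀ (j : ℤ) (f : Lp ℂ 2 (volume : Measure ℝ)),
      f ∈ Vspace ψ j ↔ ∀ p : ℤ × ℤ, j ≤ p.1 → (inner ℂ (Ψ p) f : ℂ) = 0 := by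
    intro j f
    constructor
    · intro hf p hp
      have hK : Vspace ψ j ≤ LinearMap.ker ((innerSL ℂ (Ψ p) : Lp ℂ 2 (volume : Measure ℝ) →ₗ[ℂ] ℂ)) := by
        refine Submodule.topologicalClosure_minimal _ ?_ (ContinuousLinearMap.isClosed_ker _)
        rw [Submodule.span_le]
        rintro g ⟨l, k, hl, hg⟩
        have hgΨ : g = Ψ (l, k) := Lp.ext (hg.trans (hae (l, k)).symm)
        have hne : p ≠ (l, k) := by
          rintro rfl
          exact absurd hp (not_le.2 hl)
        simp only [SetLike.mem_coe, LinearMap.mem_ker]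
        show (innerSL ℂ (Ψ p)) g = 0
        rw [innerSL_apply_apply, hgΨ]
        exact hon.2 hne
      have h2 := hK hf
      rw [LinearMap.mem_ker] at h2
      exact h2
    · intro hc
      have hsum : Filter.Tendsto (fun s : Finset (ℤ × ℤ) => ∑ p ∈ s, b.repr f p • b p)
          Filter.atTop (nhds f) := b.hasSum_repr f
      refine (hclosed j).mem_of_tendsto hsum (Filter.Eventually.of_forall ?_)
      intro s
      refine Submodule.sum_mem _ ?_
      intro p _
      by_cases hp : p.1 < j
      · exact Submodule.smul_mem _ _ (hbc p ▸ hΨmem j p hp)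
      · have h0 : b.repr f p = 0 := by
          rw [b.repr_apply_apply, hbc p]
          exact hc p (not_lt.1 hp)
        rw [h0, zero_smul]
        exact Submodule.zero_mem _
  -- (i)
  have part1 : ∀ j : ℤ, Vspace ψ j ≤ Vspace ψ (j + 1) := by
    intro j f hf
    rw [memV] at hf ⊢
    intro p hp
    exact hf p (le_trans (by omega) hp)
  -- dilation operators
  set D := WavAux.dilCLM 2 htwo with hDdef
  set D' := WavAux.dilCLM 2⁻¹ hhalf with hD'def
  -- pointwise dilation identities for the generators
  have hwav2 : ∀ (l k : ℤ) (x : ℝ), wavDT ψ l k (2 * x)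
      = (((2 : ℝ) ^ (-(2⁻¹ : ℝ)) : ℝ) : ℂ) * wavDT ψ (l + 1) k x := by
    intro l k x
    have harg : (2 : ℝ) ^ l * (2 * x) = (2 : ℝ) ^ (l + 1) * x := by
      rw [zpow_add_one₀ htwo]; ring
    have hco : ((2 : ℝ) ^ (-(2⁻¹ : ℝ))) * (2 : ℝ) ^ (((l + 1 : ℤ) : ℝ) / 2)
        = (2 : ℝ) ^ ((l : ℝ) / 2) := by
      rw [← Real.rpow_add (by norm_num : (0:ℝ) < 2)]
      congr 1
      push_cast
      ring
    simp only [wavDT]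
    rw [harg, ← hco]
    push_cast
    ring
  have hwavhalf : ∀ (l k : ℤ) (x : ℝ), wavDT ψ l k (2⁻¹ * x)
      = (((2 : ℝ) ^ ((2⁻¹ : ℝ)) : ℝ) : ℂ) * wavDT ψ (l - 1) k x := by
    intro l k x
    have harg : (2 : ℝ) ^ l * (2⁻¹ * x) = (2 : ℝ) ^ (l - 1) * x := by
      rw [zpow_sub_one₀ htwo]; ring
    have hco : ((2 : ℝ) ^ ((2⁻¹ : ℝ))) * (2 : ℝ) ^ (((l - 1 : ℤ) : ℝ) / 2)
        = (2 : ℝ) ^ ((l : ℝ) / 2) := by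
      rw [← Real.rpow_add (by norm_num : (0:ℝ) < 2)]
      congr 1
      push_cast
      ring
    simp only [wavDT]
    rw [harg, ← hco]
    push_cast
    ring
  -- action of the dilations on the generators
  have hDΨ : ∀ l k : ℤ, D (Ψ (l, k)) = (((2 : ℝ) ^ (-(2⁻¹ : ℝ)) : ℝ) : ℂ) • Ψ (l + 1, k) := by
    intro l k
    refine Lp.ext ?_
    filter_upwards [WavAux.coeFn_dilCLM 2 htwo (Ψ (l, k)),
      (WavAux.qmp_mul 2 htwo).ae_eq_comp (hae (l, k)),
      Lp.coeFn_smul ((((2 : ℝ) ^ (-(2⁻¹ : ℝ)) : ℝ) : ℂ)) (Ψ (l + 1, k)),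
      hae (l + 1, k)] with x h1 h2 h3 h4
    simp only [Function.comp_apply, Pi.smul_apply, smul_eq_mul] at h1 h2 h3 h4 ⊢
    rw [h1, h2, hwav2 l k x, h3, h4]
  have hD'Ψ : ∀ l k : ℤ, D' (Ψ (l, k)) = (((2 : ℝ) ^ ((2⁻¹ : ℝ)) : ℝ) : ℂ) • Ψ (l - 1, k) := by
    intro l k
    refine Lp.ext ?_
    filter_upwards [WavAux.coeFn_dilCLM 2⁻¹ hhalf (Ψ (l, k)),
      (WavAux.qmp_mul 2⁻¹ hhalf).ae_eq_comp (hae (l, k)),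
      Lp.coeFn_smul ((((2 : ℝ) ^ ((2⁻¹ : ℝ)) : ℝ) : ℂ)) (Ψ (l - 1, k)),
      hae (l - 1, k)] with x h1 h2 h3 h4
    simp only [Function.comp_apply, Pi.smul_apply, smul_eq_mul] at h1 h2 h3 h4 ⊢
    rw [h1, h2, hwavhalf l k x, h3, h4]
  -- the dilations map the spaces into each other
  have hDmap : ∀ j : ℤ, ∀ f ∈ Vspace ψ j, D f ∈ Vspace ψ (j + 1) := by
    intro j
    have hle : Vspace ψ j ≤ (Vspace ψ (j + 1)).comap D.toLinearMap := by
      show (Submodule.span ℂ _).topologicalClosure ≤ (Vspace ψ (j + 1)).comap D.toLinearMap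
      refine Submodule.topologicalClosure_minimal _ ?_ ?_
      · rw [Submodule.span_le]
        rintro g ⟨l, k, hl, hg⟩
        have hgΨ : g = Ψ (l, k) := Lp.ext (hg.trans (hae (l, k)).symm)
        simp only [SetLike.mem_coe, Submodule.mem_comap, ContinuousLinearMap.coe_coe]
        rw [hgΨ, hDΨ l k]
        exact Submodule.smul_mem _ _ (hΨmem (j + 1) (l + 1, k) (by omega))
      · have heq : (((Vspace ψ (j + 1)).comap D.toLinearMap :
            Set (Lp ℂ 2 (volume : Measure ℝ)))) = D ⁻¹' (Vspace ψ (j + 1)) := rfl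
        rw [heq]
        exact (hclosed (j + 1)).preimage D.continuous
    intro f hf
    exact hle hf
  have hD'map : ∀ j : ℤ, ∀ f ∈ Vspace ψ (j + 1), D' f ∈ Vspace ψ j := by
    intro j
    have hle : Vspace ψ (j + 1) ≤ (Vspace ψ j).comap D'.toLinearMap := by
      show (Submodule.span ℂ _).topologicalClosure ≤ (Vspace ψ j).comap D'.toLinearMap
      refine Submodule.topologicalClosure_minimal _ ?_ ?_
      · rw [Submodule.span_le]
        rintro g ⟨l, k, hl, hg⟩
        have hgΨ : g = Ψ (l, k) := Lp.ext (hg.trans (hae (l, k)).symm)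
        simp only [SetLike.mem_coe, Submodule.mem_comap, ContinuousLinearMap.coe_coe]
        rw [hgΨ, hD'Ψ l k]
        exact Submodule.smul_mem _ _ (hΨmem j (l - 1, k) (by omega))
      · have heq : (((Vspace ψ j).comap D'.toLinearMap :
            Set (Lp ℂ 2 (volume : Measure ℝ)))) = D' ⁻¹' (Vspace ψ j) := rfl
        rw [heq]
        exact (hclosed j).preimage D'.continuous
    intro f hf
    exact hle hf
  -- D' ∘ D = id
  have hDD : ∀ f : Lp ℂ 2 (volume : Measure ℝ), D' (D f) = f := by
    intro f
    refine Lp.ext ?_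
    filter_upwards [WavAux.coeFn_dilCLM 2⁻¹ hhalf (D f),
      (WavAux.qmp_mul 2⁻¹ hhalf).ae_eq_comp (WavAux.coeFn_dilCLM 2 htwo f)] with x h1 h2
    simp only [Function.comp_apply] at h1 h2
    rw [h1, h2]
    have hx : 2 * (2⁻¹ * x) = x := by ring
    rw [hx]
  -- (ii)
  have part2 : ∀ j : ℤ, ∀ f g : Lp ℂ 2 (volume : Measure ℝ),
      ((g : ℝ → ℂ) =ᵐ[(volume : Measure ℝ)] fun x => f (2 * x)) →
      (f ∈ Vspace ψ j ↔ g ∈ Vspace ψ (j + 1)) := by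
    intro j f g hg
    have hgD : g = D f := Lp.ext (hg.trans (WavAux.coeFn_dilCLM 2 htwo f).symm)
    constructor
    · intro hf
      rw [hgD]
      exact hDmap j f hf
    · intro hgm
      have h1 := hD'map j g hgm
      rwa [hgD, hDD f] at h1
  -- (iii)
  have part3 : Dense (⋃ j : ℤ, (Vspace ψ j : Set (Lp ℂ 2 (volume : Measure ℝ)))) := by
    have hdir : Directed (· ≤ ·) (fun j : ℤ => Vspace ψ j) :=
      (monotone_int_of_le_succ part1).directed_le
    rw [← Submodule.coe_iSup_of_directed _ hdir,
      Submodule.dense_iff_topologicalClosure_eq_top, eq_top_iff]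
    refine le_trans htot (Submodule.topologicalClosure_mono ?_)
    rw [Submodule.span_le]
    rintro x ⟨p, rfl⟩
    have : Ψ p ∈ Vspace ψ (p.1 + 1) := hΨmem (p.1 + 1) p (lt_add_one _)
    exact (le_iSup (fun j : ℤ => Vspace ψ j) (p.1 + 1)) this
  -- (iv)
  have part4 : (⨅ j : ℤ, Vspace ψ j) = ⊥ := by
    rw [eq_bot_iff]
    intro f hf
    rw [Submodule.mem_iInf] at hf
    have hc : ∀ p : ℤ × ℤ, (inner ℂ (Ψ p) f : ℂ) = 0 := fun p =>
      (memV p.1 f).1 (hf p.1) p le_rfl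
    have h0 : HasSum (fun p : ℤ × ℤ => b.repr f p • b p) f := b.hasSum_repr f
    have h0' : (fun p : ℤ × ℤ => b.repr f p • b p) = fun _ => (0 : Lp ℂ 2 (volume : Measure ℝ)) := by
      funext p
      rw [b.repr_apply_apply, hbc p, hc p, zero_smul]
    rw [h0'] at h0
    have hf0 : f = 0 := h0.unique hasSum_zero
    rw [hf0]
    exact Submodule.zero_mem _
  -- (v')
  have part5 : ∀ m : ℤ, TransInv (Vspace ψ 0) (m : ℝ) := by
    intro m f hf
    refine ⟨WavAux.trLI (m : ℝ) f, ?_, WavAux.coeFn_trLI (m : ℝ) f⟩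
    rw [memV]
    rintro ⟨l, k⟩ hp
    have hp' : (0 : ℤ) ≤ l := hp
    set k' : ℤ := k - 2 ^ l.toNat * m with hk'
    have hl' : l = (l.toNat : ℤ) := (Int.toNat_of_nonneg hp').symm
    have h2l : (2 : ℝ) ^ l = (2 : ℝ) ^ l.toNat := by
      conv_lhs => rw [hl']
      rw [zpow_natCast]
    have hpt : ∀ x : ℝ, wavDT ψ l k' (x - (m : ℝ)) = wavDT ψ l k x := by
      intro x
      have harg : (2 : ℝ) ^ l * (x - (m : ℝ)) - ((k' : ℤ) : ℝ) = (2 : ℝ) ^ l * x - (k : ℝ) := by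
        rw [hk']
        push_cast
        rw [h2l]
        ring
      simp only [wavDT]
      rw [harg]
    have hTΨ : Ψ (l, k) = WavAux.trLI (m : ℝ) (Ψ (l, k')) := by
      refine (Lp.ext ?_).symm
      filter_upwards [WavAux.coeFn_trLI (m : ℝ) (Ψ (l, k')),
        (WavAux.qmp_sub (m : ℝ)).ae_eq_comp (hae (l, k')),
        hae (l, k)] with x h1 h2 h3
      simp only [Function.comp_apply] at h1 h2 h3 ⊢
      rw [h1, h2, hpt x, h3]
    rw [hTΨ, LinearIsometry.inner_map_map]
    exact (memV 0 f).1 hf (l, k') hp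
  exact ⟨part1, part2, part3, part4, part5⟩
end

section
/- Let n ≥ 3 be an integer and let g_n : ℝ → ℝ be the function equal to 1 on [−b_n,−a_n] ∪ [c_n, a_n/2 + 2^{n−1}π] ∪ [e_n/2 + 2^{n−1}π, d_n], equal to 1/√2 on [a_n/2, e_n/2] ∪ [a_n, e_n] ∪ [a_n/2 + 2^{n−1}π, e_n/2 + 2^{n−1}π], equal to −1/√2 on [a_n + 2^nπ, e_n + 2^nπ], and 0 otherwise. Then Σ_{j∈ℤ} |g_n(2^j ξ)|² = 1 for a.e. ξ ∈ ℝ. -/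
open MeasureTheory Real Set
open scoped Classical

/-- The function `|ψ̂_n|` with signs: equal to `1`, `1/√2`, `−1/√2` on the pieces of
`F_n` and `0` elsewhere. -/
noncomputable def gfun (n : ℕ) : ℝ → ℝ := fun ξ =>
  if ξ ∈ Icc (-(bN n)) (-(aN n)) ∪ Icc (cN n) (aN n / 2 + 2 ^ (n - 1) * π) ∪
      Icc (eN n / 2 + 2 ^ (n - 1) * π) (dN n) then 1
  else if ξ ∈ Icc (aN n / 2) (eN n / 2) ∪ Icc (aN n) (eN n) ∪
      Icc (aN n / 2 + 2 ^ (n - 1) * π) (eN n / 2 + 2 ^ (n - 1) * π) then 1 / Real.sqrt 2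
  else if ξ ∈ Icc (aN n + 2 ^ n * π) (eN n + 2 ^ n * π) then -(1 / Real.sqrt 2)
  else 0

private lemma two_zpow_pos' (k : ℤ) : (0:ℝ) < 2 ^ k := by positivity

private lemma windowK {u A B γ : ℝ} (δ : ℝ) {k : ℤ} (pn pd qn qd : ℕ)
    (hγ : 0 < γ) (hu1 : γ < u) (hu2 : u < δ)
    (h1 : A ≤ (2:ℝ)^k * u) (h2 : (2:ℝ)^k * u ≤ B)
    (hA : (2:ℝ)^pn * δ ≤ 2^pd * A) (hB : (2:ℝ)^qd * B ≤ 2^qn * γ) :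
    (pn:ℤ) - (pd:ℤ) < k ∧ k < (qn:ℤ) - (qd:ℤ) := by
  have hu0 : (0:ℝ) < u := hγ.trans hu1
  have hδ : (0:ℝ) < δ := hu0.trans hu2
  have htwo : (2:ℝ) ≠ 0 := by norm_num
  constructor
  · have e1 : (2:ℝ)^((pd:ℤ)+k) = 2^(pd:ℕ) * 2^k := by
      rw [zpow_add₀ htwo, zpow_natCast]
    have hpd : (0:ℝ) < 2^(pd:ℕ) := by positivity
    have l1 : (2:ℝ)^pd * A ≤ 2^pd * (2^k*u) := mul_le_mul_of_nonneg_left h1 hpd.le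
    have l2 : (2:ℝ)^pd * (2^k*u) < 2^pd * (2^k*δ) :=
      mul_lt_mul_of_pos_left (mul_lt_mul_of_pos_left hu2 (two_zpow_pos' k)) hpd
    have step : (2:ℝ)^(pn:ℤ) * δ < (2:ℝ)^((pd:ℤ)+k) * δ := by
      rw [zpow_natCast, e1, mul_assoc]
      linarith
    have := (zpow_lt_zpow_iff_right₀ (by norm_num : (1:ℝ) < 2)).1
      (lt_of_mul_lt_mul_right step hδ.le)
    omega
  · have e1 : (2:ℝ)^((qd:ℤ)+k) = 2^(qd:ℕ) * 2^k := by
      rw [zpow_add₀ htwo, zpow_natCast]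
    have hqd : (0:ℝ) < 2^(qd:ℕ) := by positivity
    have l1 : (2:ℝ)^qd * (2^k*u) ≤ 2^qd * B := mul_le_mul_of_nonneg_left h2 hqd.le
    have l2 : (2:ℝ)^qd * (2^k*γ) < 2^qd * (2^k*u) :=
      mul_lt_mul_of_pos_left (mul_lt_mul_of_pos_left hu1 (two_zpow_pos' k)) hqd
    have step : (2:ℝ)^((qd:ℤ)+k) * γ < (2:ℝ)^(qn:ℤ) * γ := by
      rw [zpow_natCast, e1, mul_assoc]
      linarith
    have := (zpow_lt_zpow_iff_right₀ (by norm_num : (1:ℝ) < 2)).1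
      (lt_of_mul_lt_mul_right step hγ.le)
    omega

private lemma le_unscale {c w : ℝ} (j : ℕ) (h : (2:ℝ)^j * c ≤ w) :
    c ≤ (2:ℝ)^(-(j:ℤ)) * w := by
  have h0 : (0:ℝ) < (2:ℝ)^(-(j:ℤ)) := two_zpow_pos' _
  have h2 := mul_le_mul_of_nonneg_left h h0.le
  have e : (2:ℝ)^(-(j:ℤ)) * ((2:ℝ)^j * c) = c := by
    rw [← mul_assoc, ← zpow_natCast (2:ℝ) j, ← zpow_add₀ (by norm_num : (2:ℝ) ≠ 0),
      neg_add_cancel, zpow_zero, one_mul]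
  rwa [e] at h2

private lemma unscale_le {c w : ℝ} (j : ℕ) (h : w ≤ (2:ℝ)^j * c) :
    (2:ℝ)^(-(j:ℤ)) * w ≤ c := by
  have h0 : (0:ℝ) < (2:ℝ)^(-(j:ℤ)) := two_zpow_pos' _
  have h2 := mul_le_mul_of_nonneg_left h h0.le
  have e : (2:ℝ)^(-(j:ℤ)) * ((2:ℝ)^j * c) = c := by
    rw [← mul_assoc, ← zpow_natCast (2:ℝ) j, ← zpow_add₀ (by norm_num : (2:ℝ) ≠ 0),
      neg_add_cancel, zpow_zero, one_mul]
  rw [← e]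
  exact h2

set_option maxHeartbeats 1000000 in
/-- `Σ_{j∈ℤ} |g_n(2^j ξ)|² = 1` for a.e. `ξ ∈ ℝ`. -/
theorem gfun_squares_sum_one (n : ℕ) (hn : 3 ≤ n) :
    ∀ᵐ ξ ∂(volume : Measure ℝ), ∑' j : ℤ, |gfun n ((2 : ℝ) ^ j * ξ)| ^ 2 = 1 := by
  obtain ⟨m, rfl⟩ : ∃ m, n = m + 3 := ⟨n - 3, by omega⟩
  have htwo : (2:ℝ) ≠ 0 := by norm_num
  set x : ℝ := 2 ^ m with hxdef
  have hx0 : (0:ℝ) < x := by rw [hxdef]; positivity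
  have hx1 : (1:ℝ) ≤ x := by rw [hxdef]; exact one_le_pow₀ (by norm_num)
  have P1 : (2:ℝ)^(m+1) = 2*x := by rw [pow_succ, ← hxdef]; ring
  have P2 : (2:ℝ)^(m+2) = 4*x := by rw [pow_succ, P1]; ring
  have P3 : (2:ℝ)^(m+3) = 8*x := by rw [pow_succ, P2]; ring
  have P4 : (2:ℝ)^(m+4) = 16*x := by rw [pow_succ, P3]; ring
  have hpi := Real.pi_pos
  have h8x1 : (0:ℝ) < 8*x - 1 := by nlinarith
  have hden : (0:ℝ) < (2:ℝ)^(m+3) - 1 := by rw [P3]; nlinarith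
  set L : ℝ := π / ((2:ℝ)^(m+3) - 1) with hLdef
  have hL : 0 < L := div_pos hpi hden
  have hπ' : π = (8*x-1)*L := by
    rw [hLdef, P3]; field_simp
  have homega : m + 3 - 1 = m + 2 := by omega
  have ea : aN (m+3) = 4*x*L := by
    simp only [aN, homega]; rw [P2, P3, hπ']; rw [div_eq_iff (ne_of_gt h8x1)]; ring
  have eb : bN (m+3) = 8*x*L := by simp only [bN]; rw [ea]; ring
  have ec : cN (m+3) = (32*x^2-8*x)*L := by
    simp only [cN, homega]; rw [P2, P3, hπ']; rw [div_eq_iff (ne_of_gt h8x1)]; ring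
  have ed : dN (m+3) = 32*x^2*L := by simp only [dN]; rw [ea, P3]; ring
  have ee : eN (m+3) = (8*x-2)*L := by
    simp only [eN]; rw [P3, hπ']; field_simp [ne_of_gt h8x1]
  have hm2 : (0:ℝ) < x*L := mul_pos hx0 hL
  have hm3 : x*L ≤ x^2*L := by nlinarith [mul_nonneg (mul_nonneg hx0.le hL.le) (sub_nonneg.2 hx1)]
  have hm4 : L ≤ x*L := by nlinarith [mul_nonneg hL.le (sub_nonneg.2 hx1)]
  have hγ16 : (0:ℝ) < 16*x^2*L := by nlinarith
  -- the countable exceptional set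
  set E : Set ℝ := {32*x^2*L, (32*x^2-8*x)*L, (32*x^2-2*x)*L, (32*x^2-1)*L} with hE
  have hEfin : E.Finite := by
    rw [hE]
    exact (((Set.finite_singleton _).insert _).insert _).insert _
  have hEpos : ∀ y ∈ E, (0:ℝ) < y := by
    intro y hy
    rw [hE, Set.mem_insert_iff, Set.mem_insert_iff, Set.mem_insert_iff,
      Set.mem_singleton_iff] at hy
    rcases hy with rfl | rfl | rfl | rfl <;> nlinarith
  set N : Set ℝ := {z : ℝ | z = 0 ∨ ∃ j : ℤ, ∃ y, y ∈ E ∧ (z = 2^j * y ∨ z = -(2^j * y))}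
    with hN
  have hNc : N.Countable := by
    have hsub : N ⊆ {(0:ℝ)} ∪ ⋃ (j : ℤ), ⋃ y ∈ E, ({(2:ℝ)^j * y} ∪ {-((2:ℝ)^j * y)}) := by
      intro z hz
      rw [hN, Set.mem_setOf_eq] at hz
      rcases hz with rfl | ⟨j, y, hy, rfl | rfl⟩
      · exact Or.inl rfl
      · exact Or.inr (Set.mem_iUnion.2 ⟨j, Set.mem_biUnion hy (Or.inl rfl)⟩)
      · exact Or.inr (Set.mem_iUnion.2 ⟨j, Set.mem_biUnion hy (Or.inr rfl)⟩)
    refine Set.Countable.mono hsub ?_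
    refine (Set.countable_singleton 0).union (Set.countable_iUnion fun j => ?_)
    exact Set.Countable.biUnion hEfin.countable
      (fun y _ => ((Set.countable_singleton _).union (Set.countable_singleton _)))
  have hae : ∀ᵐ z ∂(volume : Measure ℝ), z ∉ N :=
    measure_eq_zero_iff_ae_notMem.mp (hNc.measure_zero _)
  filter_upwards [hae] with ξ hξ
  rw [hN, Set.mem_setOf_eq] at hξ
  push_neg at hξ
  obtain ⟨hξ0, hbad⟩ := hξ
  -- dyadic representative
  have ht0 : (0:ℝ) < |ξ| := abs_pos.2 hξ0
  obtain ⟨i, hi⟩ := exists_mem_Ico_zpow (div_pos ht0 hγ16) (by norm_num : (1:ℝ) < 2)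
  rw [Set.mem_Ico] at hi
  set w : ℝ := (2:ℝ)^(-i) * |ξ| with hwdef
  have hweq : |ξ| = (2:ℝ)^i * w := by
    rw [hwdef, ← mul_assoc, ← zpow_add₀ htwo, (show i + -i = 0 by ring), zpow_zero, one_mul]
  have hw1 : 16*x^2*L ≤ w := by
    have h1 : (2:ℝ)^i * (16*x^2*L) ≤ |ξ| := by
      rw [le_div_iff₀ hγ16] at hi
      · linarith [hi.1]
    calc 16*x^2*L = (2:ℝ)^(-i) * ((2:ℝ)^i * (16*x^2*L)) := by
          rw [← mul_assoc, ← zpow_add₀ htwo, (show -i + i = 0 by ring), zpow_zero, one_mul]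
      _ ≤ (2:ℝ)^(-i) * |ξ| := mul_le_mul_of_nonneg_left h1 (two_zpow_pos' _).le
  have hw2 : w < 32*x^2*L := by
    have h1 : |ξ| < (2:ℝ)^(i+1) * (16*x^2*L) := by
      rw [div_lt_iff₀ hγ16] at hi
      · linarith [hi.2]
    have h2 : (2:ℝ)^(-i) * |ξ| < (2:ℝ)^(-i) * ((2:ℝ)^(i+1) * (16*x^2*L)) :=
      mul_lt_mul_of_pos_left h1 (two_zpow_pos' _)
    calc w = (2:ℝ)^(-i) * |ξ| := hwdef
      _ < (2:ℝ)^(-i) * ((2:ℝ)^(i+1) * (16*x^2*L)) := h2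
      _ = 32*x^2*L := by
          rw [← mul_assoc, ← zpow_add₀ htwo, (show -i + (i+1) = 1 by ring), zpow_one]; ring
  have hw0 : (0:ℝ) < w := lt_of_lt_of_le hγ16 hw1
  have havoid : ∀ y ∈ E, ∀ j : ℤ, |ξ| ≠ 2^j * y := by
    intro y hy j h
    have hypos : (0:ℝ) ≤ (2:ℝ)^j * y := (mul_pos (two_zpow_pos' j) (hEpos y hy)).le
    rcases (abs_eq hypos).1 h with h' | h'
    · exact (hbad j y hy).1 h'
    · exact (hbad j y hy).2 h'
  have hwne : ∀ y ∈ E, w ≠ y := by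
    intro y hy h
    exact havoid y hy i (by rw [hweq, h])
  have hwlo : 16*x^2*L < w := by
    rcases lt_or_eq_of_le hw1 with h | h
    · exact h
    · exfalso
      refine havoid (32*x^2*L) (by rw [hE]; exact Set.mem_insert _ _) (i-1) ?_
      rw [hweq, ← h, zpow_sub₀ htwo, zpow_one]; ring
  have Pow2 : (2:ℝ)^(2:ℕ) = 4 := by norm_num
  have habs : |1/Real.sqrt 2| ^ 2 = (1:ℝ)/2 := by
    rw [abs_of_nonneg (by positivity), div_pow, one_pow, Real.sq_sqrt (by norm_num : (0:ℝ) ≤ 2)]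
  have habsn : |-(1/Real.sqrt 2)| ^ 2 = (1:ℝ)/2 := by rw [abs_neg]; exact habs
  rcases hξ0.lt_or_gt with hsgn | hsgn
  · -- negative ξ
    have hξw : ξ = -((2:ℝ)^i * w) := by
      rw [← hweq]; have := abs_of_neg hsgn; linarith
    have harg : ∀ k : ℤ, (2:ℝ)^k * ξ = -((2:ℝ)^(k+i) * w) := by
      intro k; rw [hξw, zpow_add₀ htwo]; ring
    have key : ∀ k : ℤ, k ≠ -(((m+2:ℕ)):ℤ) → gfun (m+3) (-((2:ℝ)^k * w)) = 0 := by
      intro k hk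
      simp only [gfun, Set.mem_union, Set.mem_Icc, homega, hπ', ea, eb, ec, ed, ee, P2, P3]
      split_ifs with h1 h2 h3
      · exfalso
        rcases h1 with (⟨hA, hB⟩ | ⟨hA, hB⟩) | ⟨hA, hB⟩
        · have h1' : 4*x*L ≤ (2:ℝ)^k * w := by linarith
          have h2' : (2:ℝ)^k * w ≤ 8*x*L := by linarith
          obtain ⟨c1, c2⟩ := windowK (32*x^2*L) 0 (m+3) 0 (m+1) hγ16 hwlo hw2 h1' h2'
            (by simp only [pow_zero]; rw [P3]; linarith [hL, hm2, hm3, hm4])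
            (by simp only [pow_zero]; rw [P1]; linarith [hL, hm2, hm3, hm4])
          omega
        · linarith [mul_pos (two_zpow_pos' k) hw0, hm2, hm3, hL]
        · linarith [mul_pos (two_zpow_pos' k) hw0, hm2, hm3, hL]
      · exfalso
        rcases h2 with (⟨hA, hB⟩ | ⟨hA, hB⟩) | ⟨hA, hB⟩ <;>
          linarith [mul_pos (two_zpow_pos' k) hw0, hm2, hm3, hL]
      · exact absurd h3.1 (by linarith [mul_pos (two_zpow_pos' k) hw0, hm2, hm3, hL])
      · rfl
    have hAe : 4*x*L ≤ (2:ℝ)^(-(((m+2:ℕ)):ℤ)) * w :=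
      le_unscale (m+2) (by rw [P2]; linarith [hw1])
    have hBe : (2:ℝ)^(-(((m+2:ℕ)):ℤ)) * w ≤ 8*x*L :=
      unscale_le (m+2) (by rw [P2]; linarith [hw2])
    have ev : gfun (m+3) (-((2:ℝ)^(-(((m+2:ℕ)):ℤ)) * w)) = 1 := by
      simp only [gfun, Set.mem_union, Set.mem_Icc, homega, hπ', ea, eb, ec, ed, ee, P2, P3]
      rw [if_pos (Or.inl (Or.inl ⟨by linarith, by linarith⟩))]
    calc ∑' j : ℤ, |gfun (m+3) ((2:ℝ)^j * ξ)|^2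
        = ∑ k ∈ ({-(((m+2:ℕ)):ℤ) - i} : Finset ℤ), |gfun (m+3) ((2:ℝ)^k * ξ)|^2 := by
          refine tsum_eq_sum ?_
          intro b hb
          simp only [Finset.mem_singleton] at hb
          rw [harg b, key (b+i) (by omega)]
          norm_num
      _ = 1 := by
          rw [Finset.sum_singleton, harg,
            (show -(((m+2:ℕ)):ℤ) - i + i = -(((m+2:ℕ)):ℤ) by ring), ev]
          norm_num
  · -- positive ξ
    have hξw : ξ = (2:ℝ)^i * w := by
      rw [← hweq]; exact (abs_of_pos hsgn).symm
    have harg : ∀ k : ℤ, (2:ℝ)^k * ξ = (2:ℝ)^(k+i) * w := by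
      intro k; rw [hξw, zpow_add₀ htwo]; ring
    have hne1 := hwne ((32*x^2-8*x)*L) (by rw [hE]; simp)
    have hne2 := hwne ((32*x^2-2*x)*L) (by rw [hE]; simp)
    have hne3 := hwne ((32*x^2-1)*L) (by rw [hE]; simp)
    rcases lt_trichotomy w ((32*x^2-8*x)*L) with hs1 | hs1 | hs1
    · -- Subcase 1 : w ∈ (16x²L, (32x²-8x)L)
      have key : ∀ k : ℤ, k ≠ -(((m+2:ℕ)):ℤ) → k ≠ -(((m+3:ℕ)):ℤ) →
          gfun (m+3) ((2:ℝ)^k * w) = 0 := by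
        intro k hk1 hk2
        simp only [gfun, Set.mem_union, Set.mem_Icc, homega, hπ', ea, eb, ec, ed, ee, P2, P3]
        split_ifs with h1 h2 h3
        · exfalso
          rcases h1 with (⟨hA, hB⟩ | ⟨hA, hB⟩) | ⟨hA, hB⟩
          · linarith [mul_pos (two_zpow_pos' k) hw0, hm2]
          · obtain ⟨c1, c2⟩ := windowK ((32*x^2-8*x)*L) 0 0 1 0 hγ16 hwlo hs1 hA hB
              (by simp only [pow_zero]; linarith [hL, hm2, hm3, hm4])
              (by simp only [pow_zero, pow_one]; linarith [hL, hm2, hm3, hm4])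
            omega
          · obtain ⟨c1, c2⟩ := windowK ((32*x^2-8*x)*L) 0 0 1 0 hγ16 hwlo hs1 hA hB
              (by simp only [pow_zero]; linarith [hL, hm2, hm3, hm4])
              (by simp only [pow_zero, pow_one]; linarith [hL, hm2, hm3, hm4])
            omega
        · exfalso
          rcases h2 with (⟨hA, hB⟩ | ⟨hA, hB⟩) | ⟨hA, hB⟩
          · obtain ⟨c1, c2⟩ := windowK ((32*x^2-8*x)*L) 0 (m+4) 0 (m+2) hγ16 hwlo hs1 hA hB
              (by simp only [pow_zero]; rw [P4]; linarith [hL, hm2, hm3, hm4])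
              (by simp only [pow_zero]; rw [P2]; linarith [hL, hm2, hm3, hm4])
            omega
          · obtain ⟨c1, c2⟩ := windowK ((32*x^2-8*x)*L) 0 (m+3) 0 (m+1) hγ16 hwlo hs1 hA hB
              (by simp only [pow_zero]; rw [P3]; linarith [hL, hm2, hm3, hm4])
              (by simp only [pow_zero]; rw [P1]; linarith [hL, hm2, hm3, hm4])
            omega
          · obtain ⟨c1, c2⟩ := windowK ((32*x^2-8*x)*L) 0 0 1 0 hγ16 hwlo hs1 hA hB
              (by simp only [pow_zero]; linarith [hL, hm2, hm3, hm4])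
              (by simp only [pow_zero, pow_one]; linarith [hL, hm2, hm3, hm4])
            omega
        · exfalso
          obtain ⟨c1, c2⟩ := windowK ((32*x^2-8*x)*L) 1 0 2 0 hγ16 hwlo hs1 h3.1 h3.2
            (by simp only [pow_zero, pow_one]; linarith [hL, hm2, hm3, hm4])
            (by simp only [pow_zero, Pow2]; linarith [hL, hm2, hm3, hm4])
          omega
        · rfl
      have hAe1 : 4*x*L ≤ (2:ℝ)^(-(((m+2:ℕ)):ℤ)) * w :=
        le_unscale (m+2) (by rw [P2]; linarith [hw1])
      have hBe1 : (2:ℝ)^(-(((m+2:ℕ)):ℤ)) * w ≤ (8*x-2)*L :=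
        unscale_le (m+2) (by rw [P2]; linarith [hs1])
      have ev1 : gfun (m+3) ((2:ℝ)^(-(((m+2:ℕ)):ℤ)) * w) = 1/Real.sqrt 2 := by
        simp only [gfun, Set.mem_union, Set.mem_Icc, homega, hπ', ea, eb, ec, ed, ee, P2, P3]
        split_ifs with h1 h2
        · exfalso
          rcases h1 with (⟨u1, u2⟩ | ⟨u1, u2⟩) | ⟨u1, u2⟩ <;>
            linarith [hAe1, hBe1, hm2, hm3, hm4, hL]
        · rfl
        · exact absurd (Or.inl (Or.inr ⟨hAe1, hBe1⟩)) h2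
        · exact absurd (Or.inl (Or.inr ⟨hAe1, hBe1⟩)) h2
      have hAe2 : 4*x*L/2 ≤ (2:ℝ)^(-(((m+3:ℕ)):ℤ)) * w :=
        le_unscale (m+3) (by rw [P3]; linarith [hw1])
      have hBe2 : (2:ℝ)^(-(((m+3:ℕ)):ℤ)) * w ≤ (8*x-2)*L/2 :=
        unscale_le (m+3) (by rw [P3]; linarith [hs1])
      have ev2 : gfun (m+3) ((2:ℝ)^(-(((m+3:ℕ)):ℤ)) * w) = 1/Real.sqrt 2 := by
        simp only [gfun, Set.mem_union, Set.mem_Icc, homega, hπ', ea, eb, ec, ed, ee, P2, P3]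
        split_ifs with h1 h2
        · exfalso
          rcases h1 with (⟨u1, u2⟩ | ⟨u1, u2⟩) | ⟨u1, u2⟩ <;>
            linarith [hAe2, hBe2, hm2, hm3, hm4, hL]
        · rfl
        · exact absurd (Or.inl (Or.inl ⟨hAe2, hBe2⟩)) h2
        · exact absurd (Or.inl (Or.inl ⟨hAe2, hBe2⟩)) h2
      calc ∑' j : ℤ, |gfun (m+3) ((2:ℝ)^j * ξ)|^2
          = ∑ k ∈ ({-(((m+2:ℕ)):ℤ) - i, -(((m+3:ℕ)):ℤ) - i} : Finset ℤ),
              |gfun (m+3) ((2:ℝ)^k * ξ)|^2 := by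
            refine tsum_eq_sum ?_
            intro b hb
            simp only [Finset.mem_insert, Finset.mem_singleton] at hb
            rw [harg b, key (b+i) (by omega) (by omega)]
            norm_num
        _ = 1 := by
            rw [Finset.sum_pair (by omega), harg, harg,
              (show -(((m+2:ℕ)):ℤ) - i + i = -(((m+2:ℕ)):ℤ) by ring),
              (show -(((m+3:ℕ)):ℤ) - i + i = -(((m+3:ℕ)):ℤ) by ring), ev1, ev2, habs]
            norm_num
    · exact absurd hs1 hne1
    rcases lt_trichotomy w ((32*x^2-2*x)*L) with hs2 | hs2 | hs2
    · -- Subcase 2 : w ∈ ((32x²-8x)L, (32x²-2x)L)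
      have hγ' : (0:ℝ) < (32*x^2-8*x)*L := by linarith [hm2, hm3]
      have key : ∀ k : ℤ, k ≠ 0 → gfun (m+3) ((2:ℝ)^k * w) = 0 := by
        intro k hk
        simp only [gfun, Set.mem_union, Set.mem_Icc, homega, hπ', ea, eb, ec, ed, ee, P2, P3]
        split_ifs with h1 h2 h3
        · exfalso
          rcases h1 with (⟨hA, hB⟩ | ⟨hA, hB⟩) | ⟨hA, hB⟩
          · linarith [mul_pos (two_zpow_pos' k) hw0, hm2]
          · obtain ⟨c1, c2⟩ := windowK ((32*x^2-2*x)*L) 0 1 1 0 hγ' hs1 hs2 hA hB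
              (by simp only [pow_zero, pow_one]; linarith [hL, hm2, hm3, hm4])
              (by simp only [pow_zero, pow_one]; linarith [hL, hm2, hm3, hm4])
            omega
          · obtain ⟨c1, c2⟩ := windowK ((32*x^2-2*x)*L) 0 0 1 0 hγ' hs1 hs2 hA hB
              (by simp only [pow_zero]; linarith [hL, hm2, hm3, hm4])
              (by simp only [pow_zero, pow_one]; linarith [hL, hm2, hm3, hm4])
            omega
        · exfalso
          rcases h2 with (⟨hA, hB⟩ | ⟨hA, hB⟩) | ⟨hA, hB⟩
          · obtain ⟨c1, c2⟩ := windowK ((32*x^2-2*x)*L) 0 (m+4) 0 (m+3) hγ' hs1 hs2 hA hB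
              (by simp only [pow_zero]; rw [P4]; linarith [hL, hm2, hm3, hm4])
              (by simp only [pow_zero]; rw [P3]; linarith [hL, hm2, hm3, hm4])
            omega
          · obtain ⟨c1, c2⟩ := windowK ((32*x^2-2*x)*L) 0 (m+3) 0 (m+2) hγ' hs1 hs2 hA hB
              (by simp only [pow_zero]; rw [P3]; linarith [hL, hm2, hm3, hm4])
              (by simp only [pow_zero]; rw [P2]; linarith [hL, hm2, hm3, hm4])
            omega
          · obtain ⟨c1, c2⟩ := windowK ((32*x^2-2*x)*L) 0 0 1 0 hγ' hs1 hs2 hA hB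
              (by simp only [pow_zero]; linarith [hL, hm2, hm3, hm4])
              (by simp only [pow_zero, pow_one]; linarith [hL, hm2, hm3, hm4])
            omega
        · exfalso
          obtain ⟨c1, c2⟩ := windowK ((32*x^2-2*x)*L) 1 0 2 0 hγ' hs1 hs2 h3.1 h3.2
            (by simp only [pow_zero, pow_one]; linarith [hL, hm2, hm3, hm4])
            (by simp only [pow_zero, Pow2]; linarith [hL, hm2, hm3, hm4])
          omega
        · rfl
      have ev : gfun (m+3) ((2:ℝ)^(0:ℤ) * w) = 1 := by
        rw [zpow_zero, one_mul]
        simp only [gfun, Set.mem_union, Set.mem_Icc, homega, hπ', ea, eb, ec, ed, ee, P2, P3]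
        rw [if_pos (Or.inl (Or.inr ⟨by linarith, by linarith⟩))]
      calc ∑' j : ℤ, |gfun (m+3) ((2:ℝ)^j * ξ)|^2
          = ∑ k ∈ ({-i} : Finset ℤ), |gfun (m+3) ((2:ℝ)^k * ξ)|^2 := by
            refine tsum_eq_sum ?_
            intro b hb
            simp only [Finset.mem_singleton] at hb
            rw [harg b, key (b+i) (by omega)]
            norm_num
        _ = 1 := by
            rw [Finset.sum_singleton, harg, (show -i + i = 0 by ring), ev]
            norm_num
    · exact absurd hs2 hne2
    rcases lt_trichotomy w ((32*x^2-1)*L) with hs3 | hs3 | hs3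
    · -- Subcase 3 : w ∈ ((32x²-2x)L, (32x²-1)L)
      have hγ' : (0:ℝ) < (32*x^2-2*x)*L := by linarith [hm2, hm3]
      have key : ∀ k : ℤ, k ≠ 0 → k ≠ 1 → gfun (m+3) ((2:ℝ)^k * w) = 0 := by
        intro k hk1 hk2
        simp only [gfun, Set.mem_union, Set.mem_Icc, homega, hπ', ea, eb, ec, ed, ee, P2, P3]
        split_ifs with h1 h2 h3
        · exfalso
          rcases h1 with (⟨hA, hB⟩ | ⟨hA, hB⟩) | ⟨hA, hB⟩
          · linarith [mul_pos (two_zpow_pos' k) hw0, hm2]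
          · obtain ⟨c1, c2⟩ := windowK ((32*x^2-1)*L) 0 1 1 0 hγ' hs2 hs3 hA hB
              (by simp only [pow_zero, pow_one]; linarith [hL, hm2, hm3, hm4])
              (by simp only [pow_zero, pow_one]; linarith [hL, hm2, hm3, hm4])
            omega
          · obtain ⟨c1, c2⟩ := windowK ((32*x^2-1)*L) 0 0 1 0 hγ' hs2 hs3 hA hB
              (by simp only [pow_zero]; linarith [hL, hm2, hm3, hm4])
              (by simp only [pow_zero, pow_one]; linarith [hL, hm2, hm3, hm4])
            omega
        · exfalso
          rcases h2 with (⟨hA, hB⟩ | ⟨hA, hB⟩) | ⟨hA, hB⟩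
          · obtain ⟨c1, c2⟩ := windowK ((32*x^2-1)*L) 0 (m+4) 0 (m+3) hγ' hs2 hs3 hA hB
              (by simp only [pow_zero]; rw [P4]; linarith [hL, hm2, hm3, hm4])
              (by simp only [pow_zero]; rw [P3]; linarith [hL, hm2, hm3, hm4])
            omega
          · obtain ⟨c1, c2⟩ := windowK ((32*x^2-1)*L) 0 (m+3) 0 (m+2) hγ' hs2 hs3 hA hB
              (by simp only [pow_zero]; rw [P3]; linarith [hL, hm2, hm3, hm4])
              (by simp only [pow_zero]; rw [P2]; linarith [hL, hm2, hm3, hm4])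
            omega
          · obtain ⟨c1, c2⟩ := windowK ((32*x^2-1)*L) 0 1 1 0 hγ' hs2 hs3 hA hB
              (by simp only [pow_zero, pow_one]; linarith [hL, hm2, hm3, hm4])
              (by simp only [pow_zero, pow_one]; linarith [hL, hm2, hm3, hm4])
            omega
        · exfalso
          obtain ⟨c1, c2⟩ := windowK ((32*x^2-1)*L) 0 0 2 0 hγ' hs2 hs3 h3.1 h3.2
            (by simp only [pow_zero]; linarith [hL, hm2, hm3, hm4])
            (by simp only [pow_zero, Pow2]; linarith [hL, hm2, hm3, hm4])
          omega
        · rfl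
      have ev1 : gfun (m+3) ((2:ℝ)^(0:ℤ) * w) = 1/Real.sqrt 2 := by
        rw [zpow_zero, one_mul]
        simp only [gfun, Set.mem_union, Set.mem_Icc, homega, hπ', ea, eb, ec, ed, ee, P2, P3]
        split_ifs with h1 h2
        · exfalso
          rcases h1 with (⟨u1, u2⟩ | ⟨u1, u2⟩) | ⟨u1, u2⟩ <;>
            linarith [hw0, hs2, hs3, hm2, hm3, hm4, hL]
        · rfl
        · exact absurd (Or.inr ⟨by linarith, by linarith⟩) h2
        · exact absurd (Or.inr ⟨by linarith, by linarith⟩) h2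
      have ev2 : gfun (m+3) ((2:ℝ)^(1:ℤ) * w) = -(1/Real.sqrt 2) := by
        rw [zpow_one]
        simp only [gfun, Set.mem_union, Set.mem_Icc, homega, hπ', ea, eb, ec, ed, ee, P2, P3]
        split_ifs with h1 h2 h3
        · exfalso
          rcases h1 with (⟨u1, u2⟩ | ⟨u1, u2⟩) | ⟨u1, u2⟩ <;>
            linarith [hw0, hs2, hs3, hm2, hm3, hm4, hL]
        · exfalso
          rcases h2 with (⟨u1, u2⟩ | ⟨u1, u2⟩) | ⟨u1, u2⟩ <;>
            linarith [hw0, hs2, hs3, hm2, hm3, hm4, hL]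
        · rfl
        · exact absurd ⟨by linarith, by linarith⟩ h3
      calc ∑' j : ℤ, |gfun (m+3) ((2:ℝ)^j * ξ)|^2
          = ∑ k ∈ ({-i, 1 - i} : Finset ℤ), |gfun (m+3) ((2:ℝ)^k * ξ)|^2 := by
            refine tsum_eq_sum ?_
            intro b hb
            simp only [Finset.mem_insert, Finset.mem_singleton] at hb
            rw [harg b, key (b+i) (by omega) (by omega)]
            norm_num
        _ = 1 := by
            rw [Finset.sum_pair (by omega), harg, harg,
              (show -i + i = 0 by ring), (show 1 - i + i = 1 by ring), ev1, ev2, habs, habsn]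
            norm_num
    · exact absurd hs3 hne3
    · -- Subcase 4 : w ∈ ((32x²-1)L, 32x²L)
      have hγ' : (0:ℝ) < (32*x^2-1)*L := by linarith [hm2, hm3, hm4]
      have key : ∀ k : ℤ, k ≠ 0 → gfun (m+3) ((2:ℝ)^k * w) = 0 := by
        intro k hk
        simp only [gfun, Set.mem_union, Set.mem_Icc, homega, hπ', ea, eb, ec, ed, ee, P2, P3]
        split_ifs with h1 h2 h3
        · exfalso
          rcases h1 with (⟨hA, hB⟩ | ⟨hA, hB⟩) | ⟨hA, hB⟩
          · linarith [mul_pos (two_zpow_pos' k) hw0, hm2]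
          · obtain ⟨c1, c2⟩ := windowK (32*x^2*L) 0 1 0 0 hγ' hs3 hw2 hA hB
              (by simp only [pow_zero, pow_one]; linarith [hL, hm2, hm3, hm4])
              (by simp only [pow_zero]; linarith [hL, hm2, hm3, hm4])
            omega
          · obtain ⟨c1, c2⟩ := windowK (32*x^2*L) 0 1 1 0 hγ' hs3 hw2 hA hB
              (by simp only [pow_zero, pow_one]; linarith [hL, hm2, hm3, hm4])
              (by simp only [pow_zero, pow_one]; linarith [hL, hm2, hm3, hm4])
            omega
        · exfalso
          rcases h2 with (⟨hA, hB⟩ | ⟨hA, hB⟩) | ⟨hA, hB⟩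
          · obtain ⟨c1, c2⟩ := windowK (32*x^2*L) 0 (m+4) 0 (m+3) hγ' hs3 hw2 hA hB
              (by simp only [pow_zero]; rw [P4]; linarith [hL, hm2, hm3, hm4])
              (by simp only [pow_zero]; rw [P3]; linarith [hL, hm2, hm3, hm4])
            omega
          · obtain ⟨c1, c2⟩ := windowK (32*x^2*L) 0 (m+3) 0 (m+2) hγ' hs3 hw2 hA hB
              (by simp only [pow_zero]; rw [P3]; linarith [hL, hm2, hm3, hm4])
              (by simp only [pow_zero]; rw [P2]; linarith [hL, hm2, hm3, hm4])
            omega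
          · obtain ⟨c1, c2⟩ := windowK (32*x^2*L) 0 1 0 0 hγ' hs3 hw2 hA hB
              (by simp only [pow_zero, pow_one]; linarith [hL, hm2, hm3, hm4])
              (by simp only [pow_zero]; linarith [hL, hm2, hm3, hm4])
            omega
        · exfalso
          obtain ⟨c1, c2⟩ := windowK (32*x^2*L) 0 0 2 0 hγ' hs3 hw2 h3.1 h3.2
            (by simp only [pow_zero]; linarith [hL, hm2, hm3, hm4])
            (by simp only [pow_zero, Pow2]; linarith [hL, hm2, hm3, hm4])
          have hk1 : k = 1 := by omega
          subst hk1
          rw [(show ((2:ℝ)^(1:ℤ) = 2) from zpow_one 2)] at h3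
          linarith [h3.2, hs3, hm2, hm3, hm4, hL]
        · rfl
      have ev : gfun (m+3) ((2:ℝ)^(0:ℤ) * w) = 1 := by
        rw [zpow_zero, one_mul]
        simp only [gfun, Set.mem_union, Set.mem_Icc, homega, hπ', ea, eb, ec, ed, ee, P2, P3]
        rw [if_pos (Or.inr ⟨by linarith, by linarith⟩)]
      calc ∑' j : ℤ, |gfun (m+3) ((2:ℝ)^j * ξ)|^2
          = ∑ k ∈ ({-i} : Finset ℤ), |gfun (m+3) ((2:ℝ)^k * ξ)|^2 := by
            refine tsum_eq_sum ?_
            intro b hb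
            simp only [Finset.mem_singleton] at hb
            rw [harg b, key (b+i) (by omega)]
            norm_num
        _ = 1 := by
            rw [Finset.sum_singleton, harg, (show -i + i = 0 by ring), ev]
            norm_num
end

section
/- Let n ≥ 3 be an integer and let g_n : ℝ → ℝ be the function equal to 1 on [−b_n,−a_n] ∪ [c_n, a_n/2 + 2^{n−1}π] ∪ [e_n/2 + 2^{n−1}π, d_n], equal to 1/√2 on [a_n/2, e_n/2] ∪ [a_n, e_n] ∪ [a_n/2 + 2^{n−1}π, e_n/2 + 2^{n−1}π], equal to −1/√2 on [a_n + 2^nπ, e_n + 2^nπ], and 0 otherwise. Then for every odd integer q, Σ_{j≥0} g_n(2^j ξ) · g_n(2^j(ξ + 2qπ)) = 0 for a.e. ξ ∈ ℝ. -/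
open MeasureTheory Real Set
open scoped Classical

noncomputable def Gg (m : ℤ) (t : ℝ) : ℝ :=
  if t ∈ Icc (-(4*(m:ℝ))) (-(2*(m:ℝ))) ∪ Icc (8*(m:ℝ)^2-4*m) (8*(m:ℝ)^2-m) ∪
      Icc (8*(m:ℝ)^2-1) (8*(m:ℝ)^2) then 1
  else if t ∈ Icc ((m:ℝ)) (2*(m:ℝ)-1) ∪ Icc (2*(m:ℝ)) (4*(m:ℝ)-2) ∪
      Icc (8*(m:ℝ)^2-m) (8*(m:ℝ)^2-1) then 1 / Real.sqrt 2
  else if t ∈ Icc (16*(m:ℝ)^2-2*m) (16*(m:ℝ)^2-2) then -(1 / Real.sqrt 2)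
  else 0

lemma odd_dvd_pow_two (q : ℤ) (k : ℕ) (hq : Odd q) (h : q ∣ 2^k) : q = 1 ∨ q = -1 := by
  have h1 : q.natAbs ∣ ((2:ℕ)^k) := by
    have := Int.natAbs_dvd_natAbs.mpr h
    simpa [Int.natAbs_pow] using this
  have h2 : Nat.Coprime q.natAbs 2 := Nat.coprime_two_right.mpr (Int.natAbs_odd.mpr hq)
  have h3 := Nat.Coprime.eq_one_of_dvd (h2.pow_right k) h1
  rcases Int.natAbs_eq q with h' | h' <;> omega

lemma two_pow_inj {a b : ℕ} (h : (2:ℤ)^a = 2^b) : a = b := by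
  have : (2:ℕ)^a = 2^b := by exact_mod_cast h
  exact Nat.pow_right_injective (le_refl 2) this

variable {m : ℤ} {t : ℝ}

lemma Gg_val4 (hm : (2:ℝ) ≤ (m:ℝ)) (h : t ∈ Ioo ((m:ℝ)) (2*(m:ℝ)-1)) :
    Gg m t = 1/Real.sqrt 2 := by
  obtain ⟨h1, h2⟩ := h
  unfold Gg
  simp only [mem_union, mem_Icc]
  rw [if_neg (by rintro ((⟨ha,hb⟩|⟨ha,hb⟩)|⟨ha,hb⟩) <;> nlinarith),
    if_pos (Or.inl (Or.inl ⟨h1.le, h2.le⟩))]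

lemma Gg_val5 (hm : (2:ℝ) ≤ (m:ℝ)) (h : t ∈ Ioo (2*(m:ℝ)) (4*(m:ℝ)-2)) :
    Gg m t = 1/Real.sqrt 2 := by
  obtain ⟨h1, h2⟩ := h
  unfold Gg
  simp only [mem_union, mem_Icc]
  rw [if_neg (by rintro ((⟨ha,hb⟩|⟨ha,hb⟩)|⟨ha,hb⟩) <;> nlinarith),
    if_pos (Or.inl (Or.inr ⟨h1.le, h2.le⟩))]

lemma Gg_val6 (hm : (2:ℝ) ≤ (m:ℝ)) (h : t ∈ Ioo (8*(m:ℝ)^2-m) (8*(m:ℝ)^2-1)) :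
    Gg m t = 1/Real.sqrt 2 := by
  obtain ⟨h1, h2⟩ := h
  unfold Gg
  simp only [mem_union, mem_Icc]
  rw [if_neg (by rintro ((⟨ha,hb⟩|⟨ha,hb⟩)|⟨ha,hb⟩) <;> nlinarith),
    if_pos (Or.inr ⟨h1.le, h2.le⟩)]

lemma Gg_val7 (hm : (2:ℝ) ≤ (m:ℝ)) (h : t ∈ Ioo (16*(m:ℝ)^2-2*m) (16*(m:ℝ)^2-2)) :
    Gg m t = -(1/Real.sqrt 2) := by
  obtain ⟨h1, h2⟩ := h
  unfold Gg
  simp only [mem_union, mem_Icc]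
  rw [if_neg (by rintro ((⟨ha,hb⟩|⟨ha,hb⟩)|⟨ha,hb⟩) <;> nlinarith),
    if_neg (by rintro ((⟨ha,hb⟩|⟨ha,hb⟩)|⟨ha,hb⟩) <;> nlinarith),
    if_pos ⟨h1.le, h2.le⟩]

lemma Gg_gap (hm : (2:ℝ) ≤ (m:ℝ)) (h : t ∈ Ioo (2*(m:ℝ)-1) (2*(m:ℝ))) :
    Gg m t = 0 := by
  obtain ⟨h1, h2⟩ := h
  unfold Gg
  simp only [mem_union, mem_Icc]
  rw [if_neg (by rintro ((⟨ha,hb⟩|⟨ha,hb⟩)|⟨ha,hb⟩) <;> nlinarith),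
    if_neg (by rintro ((⟨ha,hb⟩|⟨ha,hb⟩)|⟨ha,hb⟩) <;> nlinarith),
    if_neg (by rintro ⟨ha,hb⟩ <;> nlinarith)]

lemma Gg_supp (hm : (2:ℝ) ≤ (m:ℝ)) (h : Gg m t ≠ 0) :
    t ∈ Icc (-(4*(m:ℝ))) (-(2*(m:ℝ))) ∪ Icc ((m:ℝ)) (4*(m:ℝ)-2) ∪
      Icc (8*(m:ℝ)^2-4*m) (8*(m:ℝ)^2) ∪ Icc (16*(m:ℝ)^2-2*m) (16*(m:ℝ)^2-2) := by
  unfold Gg at h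
  simp only [mem_union, mem_Icc] at h
  split_ifs at h with h1 h2 h3
  · rcases h1 with ((⟨ha,hb⟩|⟨ha,hb⟩)|⟨ha,hb⟩)
    · exact Or.inl (Or.inl (Or.inl ⟨ha, hb⟩))
    · exact Or.inl (Or.inr ⟨by nlinarith, by nlinarith⟩)
    · exact Or.inl (Or.inr ⟨by nlinarith, by nlinarith⟩)
  · rcases h2 with ((⟨ha,hb⟩|⟨ha,hb⟩)|⟨ha,hb⟩)
    · exact Or.inl (Or.inl (Or.inr ⟨by nlinarith, by nlinarith⟩))
    · exact Or.inl (Or.inl (Or.inr ⟨by nlinarith, by nlinarith⟩))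
    · exact Or.inl (Or.inr ⟨by nlinarith, by nlinarith⟩)
  · exact Or.inr ⟨h3.1, h3.2⟩
  · exact absurd rfl h

lemma Gg_supp' (hm : (2:ℝ) ≤ (m:ℝ)) (ht : ∀ k : ℤ, t ≠ (k:ℝ)) (h : Gg m t ≠ 0) :
    t ∈ Ioo (-(4*(m:ℝ))) (-(2*(m:ℝ))) ∨ t ∈ Ioo ((m:ℝ)) (4*(m:ℝ)-2) ∨
    t ∈ Ioo (8*(m:ℝ)^2-4*m) (8*(m:ℝ)^2) ∨ t ∈ Ioo (16*(m:ℝ)^2-2*m) (16*(m:ℝ)^2-2) := by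
  have hne : ∀ (k : ℤ) (y : ℝ), y = (k:ℝ) → t ≠ y := fun k y hy => hy ▸ ht k
  rcases Gg_supp hm h with (((⟨u1,u2⟩|⟨u1,u2⟩)|⟨u1,u2⟩)|⟨u1,u2⟩)
  · exact Or.inl ⟨lt_of_le_of_ne u1 (Ne.symm (hne (-4*m) _ (by push_cast; ring))),
      lt_of_le_of_ne u2 (hne (-2*m) _ (by push_cast; ring))⟩
  · exact Or.inr (Or.inl ⟨lt_of_le_of_ne u1 (Ne.symm (hne m _ (by push_cast; ring))),
      lt_of_le_of_ne u2 (hne (4*m-2) _ (by push_cast; ring))⟩)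
  · exact Or.inr (Or.inr (Or.inl ⟨lt_of_le_of_ne u1 (Ne.symm (hne (8*m^2-4*m) _ (by push_cast; ring))),
      lt_of_le_of_ne u2 (hne (8*m^2) _ (by push_cast; ring))⟩))
  · exact Or.inr (Or.inr (Or.inr ⟨lt_of_le_of_ne u1 (Ne.symm (hne (16*m^2-2*m) _ (by push_cast; ring))),
      lt_of_le_of_ne u2 (hne (16*m^2-2) _ (by push_cast; ring))⟩))

lemma no_c (m c K1 K2 L R : ℤ) (hm : 2 ≤ m) (hsplit : c ≤ K1 ∨ K2 ≤ c)
    (hlow : K1*(4*m-1) ≤ L) (hhigh : R ≤ K2*(4*m-1))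
    (h1 : L < c*(4*m-1)) (h2 : c*(4*m-1) < R) : False := by
  have hpos : (0:ℤ) ≤ 4*m-1 := by linarith
  rcases hsplit with h|h
  · linarith [mul_le_mul_of_nonneg_right h hpos]
  · linarith [mul_le_mul_of_nonneg_right h hpos]

lemma c_eq (m c K L R : ℤ) (hm : 2 ≤ m) (hsplit : c ≤ K - 2 ∨ c = K ∨ K + 2 ≤ c)
    (hlow : (K-2)*(4*m-1) ≤ L) (hhigh : R ≤ (K+2)*(4*m-1))
    (h1 : L < c*(4*m-1)) (h2 : c*(4*m-1) < R) : c = K := by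
  have hpos : (0:ℤ) ≤ 4*m-1 := by linarith
  rcases hsplit with h|h|h
  · linarith [mul_le_mul_of_nonneg_right h hpos]
  · exact h
  · linarith [mul_le_mul_of_nonneg_right h hpos]

set_option maxHeartbeats 2000000 in
lemma Gg_key (m c : ℤ) (hm : 2 ≤ m) (hc0 : c ≠ 0) (hce : c % 2 = 0)
    (t : ℝ) (ht : ∀ k : ℤ, t ≠ (k:ℝ)) :
    Gg m t * Gg m (t + (c:ℝ) * (4*(m:ℝ)-1)) =
      if c = 2*m ∧ t ∈ Ioo ((m:ℝ)) (2*(m:ℝ)-1) then 1/2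
      else if c = -(2*m) ∧ t ∈ Ioo (8*(m:ℝ)^2-m) (8*(m:ℝ)^2-1) then 1/2
      else if c = 4*m ∧ t ∈ Ioo (2*(m:ℝ)) (4*(m:ℝ)-2) then -(1/2)
      else if c = -(4*m) ∧ t ∈ Ioo (16*(m:ℝ)^2-2*m) (16*(m:ℝ)^2-2) then -(1/2)
      else 0 := by
  have hmr : (2:ℝ) ≤ (m:ℝ) := by exact_mod_cast hm
  have hrr : (1/Real.sqrt 2) * (1/Real.sqrt 2) = 1/2 := by
    rw [div_mul_div_comm, one_mul, Real.mul_self_sqrt (by norm_num : (0:ℝ) ≤ 2)]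
  by_cases h1 : c = 2*m ∧ t ∈ Ioo ((m:ℝ)) (2*(m:ℝ)-1)
  · obtain ⟨hc, hmem⟩ := h1
    have hcr : (c:ℝ) = 2*(m:ℝ) := by exact_mod_cast hc
    have hmem' : t + (c:ℝ)*(4*(m:ℝ)-1) ∈ Ioo (8*(m:ℝ)^2-(m:ℝ)) (8*(m:ℝ)^2-1) := by
      rw [hcr]; exact ⟨by nlinarith [hmem.1], by nlinarith [hmem.2]⟩
    rw [if_pos ⟨hc, hmem⟩, Gg_val4 hmr hmem, Gg_val6 hmr hmem', hrr]
  rw [if_neg h1]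
  by_cases h2 : c = -(2*m) ∧ t ∈ Ioo (8*(m:ℝ)^2-m) (8*(m:ℝ)^2-1)
  · obtain ⟨hc, hmem⟩ := h2
    have hcr : (c:ℝ) = -(2*(m:ℝ)) := by exact_mod_cast hc
    have hmem' : t + (c:ℝ)*(4*(m:ℝ)-1) ∈ Ioo ((m:ℝ)) (2*(m:ℝ)-1) := by
      rw [hcr]; exact ⟨by nlinarith [hmem.1], by nlinarith [hmem.2]⟩
    rw [if_pos ⟨hc, hmem⟩, Gg_val6 hmr hmem, Gg_val4 hmr hmem', hrr]
  rw [if_neg h2]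
  by_cases h3 : c = 4*m ∧ t ∈ Ioo (2*(m:ℝ)) (4*(m:ℝ)-2)
  · obtain ⟨hc, hmem⟩ := h3
    have hcr : (c:ℝ) = 4*(m:ℝ) := by exact_mod_cast hc
    have hmem' : t + (c:ℝ)*(4*(m:ℝ)-1) ∈ Ioo (16*(m:ℝ)^2-2*(m:ℝ)) (16*(m:ℝ)^2-2) := by
      rw [hcr]; exact ⟨by nlinarith [hmem.1], by nlinarith [hmem.2]⟩
    rw [if_pos ⟨hc, hmem⟩, Gg_val5 hmr hmem, Gg_val7 hmr hmem']
    rw [mul_neg, hrr]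
  rw [if_neg h3]
  by_cases h4 : c = -(4*m) ∧ t ∈ Ioo (16*(m:ℝ)^2-2*m) (16*(m:ℝ)^2-2)
  · obtain ⟨hc, hmem⟩ := h4
    have hcr : (c:ℝ) = -(4*(m:ℝ)) := by exact_mod_cast hc
    have hmem' : t + (c:ℝ)*(4*(m:ℝ)-1) ∈ Ioo (2*(m:ℝ)) (4*(m:ℝ)-2) := by
      rw [hcr]; exact ⟨by nlinarith [hmem.1], by nlinarith [hmem.2]⟩
    rw [if_pos ⟨hc, hmem⟩, Gg_val7 hmr hmem, Gg_val5 hmr hmem']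
    rw [neg_mul, hrr]
  rw [if_neg h4]
  by_cases hz1 : Gg m t = 0
  · rw [hz1, zero_mul]
  by_cases hz2 : Gg m (t + (c:ℝ)*(4*(m:ℝ)-1)) = 0
  · rw [hz2, mul_zero]
  exfalso
  have hts : ∀ k : ℤ, t + (c:ℝ)*(4*(m:ℝ)-1) ≠ (k:ℝ) := by
    intro k hk
    exact ht (k - c*(4*m-1)) (by push_cast; linarith)
  have hS1 := Gg_supp' hmr ht hz1
  have hS2 := Gg_supp' hmr hts hz2
  rcases hS1 with h|h|h|h <;> rcases hS2 with h'|h'|h'|h' <;>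
    obtain ⟨ha1, ha2⟩ := h <;> obtain ⟨hb1, hb2⟩ := h'
  -- (1,1)
  · refine no_c m c (-2) 2 (-2*m) (2*m) hm (by omega) (by nlinarith) (by nlinarith) ?_ ?_
    · exact_mod_cast show ((-2*m:ℤ):ℝ) < (c:ℝ)*(4*(m:ℝ)-1) by push_cast; linarith
    · exact_mod_cast show (c:ℝ)*(4*(m:ℝ)-1) < ((2*m:ℤ):ℝ) by push_cast; linarith
  -- (1,2)
  · refine no_c m c 0 2 (3*m) (8*m-2) hm (by omega) (by nlinarith) (by nlinarith) ?_ ?_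
    · exact_mod_cast show ((3*m:ℤ):ℝ) < (c:ℝ)*(4*(m:ℝ)-1) by push_cast; linarith
    · exact_mod_cast show (c:ℝ)*(4*(m:ℝ)-1) < ((8*m-2:ℤ):ℝ) by push_cast; linarith
  -- (1,3)
  · refine no_c m c (2*m) (2*m+2) (8*m^2-2*m) (8*m^2+4*m) hm (by omega) (by nlinarith) (by nlinarith) ?_ ?_
    · exact_mod_cast show ((8*m^2-2*m:ℤ):ℝ) < (c:ℝ)*(4*(m:ℝ)-1) by push_cast; linarith
    · exact_mod_cast show (c:ℝ)*(4*(m:ℝ)-1) < ((8*m^2+4*m:ℤ):ℝ) by push_cast; linarith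
  -- (1,4)
  · refine no_c m c (4*m) (4*m+2) (16*m^2) (16*m^2+4*m-2) hm (by omega) (by nlinarith) (by nlinarith) ?_ ?_
    · exact_mod_cast show ((16*m^2:ℤ):ℝ) < (c:ℝ)*(4*(m:ℝ)-1) by push_cast; linarith
    · exact_mod_cast show (c:ℝ)*(4*(m:ℝ)-1) < ((16*m^2+4*m-2:ℤ):ℝ) by push_cast; linarith
  -- (2,1)
  · refine no_c m c (-2) 0 (-8*m+2) (-3*m) hm (by omega) (by nlinarith) (by nlinarith) ?_ ?_
    · exact_mod_cast show ((-8*m+2:ℤ):ℝ) < (c:ℝ)*(4*(m:ℝ)-1) by push_cast; linarith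
    · exact_mod_cast show (c:ℝ)*(4*(m:ℝ)-1) < ((-3*m:ℤ):ℝ) by push_cast; linarith
  -- (2,2)
  · refine no_c m c (-2) 2 (-3*m+2) (3*m-2) hm (by omega) (by nlinarith) (by nlinarith) ?_ ?_
    · exact_mod_cast show ((-3*m+2:ℤ):ℝ) < (c:ℝ)*(4*(m:ℝ)-1) by push_cast; linarith
    · exact_mod_cast show (c:ℝ)*(4*(m:ℝ)-1) < ((3*m-2:ℤ):ℝ) by push_cast; linarith
  -- (2,3): c = 2m
  · have hc : c = 2*m := by
      refine c_eq m c (2*m) (8*m^2-8*m+2) (8*m^2-m) hm (by omega) (by nlinarith) (by nlinarith) ?_ ?_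
      · exact_mod_cast show ((8*m^2-8*m+2:ℤ):ℝ) < (c:ℝ)*(4*(m:ℝ)-1) by push_cast; linarith
      · exact_mod_cast show (c:ℝ)*(4*(m:ℝ)-1) < ((8*m^2-m:ℤ):ℝ) by push_cast; linarith
    have hcr : (c:ℝ) = 2*(m:ℝ) := by exact_mod_cast hc
    rw [hcr] at hb1 hb2
    rcases lt_trichotomy t (2*(m:ℝ)-1) with hlt|heq|hgt
    · exact h1 ⟨hc, ⟨ha1, hlt⟩⟩
    · exact ht (2*m-1) (by push_cast; linarith)
    · exact hz1 (Gg_gap hmr ⟨hgt, by linarith⟩)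
  -- (2,4): c = 4m
  · have hc : c = 4*m := by
      refine c_eq m c (4*m) (16*m^2-6*m+2) (16*m^2-m-2) hm (by omega) (by nlinarith) (by nlinarith) ?_ ?_
      · exact_mod_cast show ((16*m^2-6*m+2:ℤ):ℝ) < (c:ℝ)*(4*(m:ℝ)-1) by push_cast; linarith
      · exact_mod_cast show (c:ℝ)*(4*(m:ℝ)-1) < ((16*m^2-m-2:ℤ):ℝ) by push_cast; linarith
    have hcr : (c:ℝ) = 4*(m:ℝ) := by exact_mod_cast hc
    rw [hcr] at hb1 hb2
    exact h3 ⟨hc, ⟨by linarith, by linarith⟩⟩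
  -- (3,1)
  · refine no_c m c (-2*m-2) (-2*m) (-8*m^2-4*m) (-8*m^2+2*m) hm (by omega) (by nlinarith) (by nlinarith) ?_ ?_
    · exact_mod_cast show ((-8*m^2-4*m:ℤ):ℝ) < (c:ℝ)*(4*(m:ℝ)-1) by push_cast; linarith
    · exact_mod_cast show (c:ℝ)*(4*(m:ℝ)-1) < ((-8*m^2+2*m:ℤ):ℝ) by push_cast; linarith
  -- (3,2): c = -2m
  · have hc : c = -(2*m) := by
      have : c = -2*m := by
        refine c_eq m c (-2*m) (-8*m^2+m) (-8*m^2+8*m-2) hm (by omega) (by nlinarith) (by nlinarith) ?_ ?_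
        · exact_mod_cast show ((-8*m^2+m:ℤ):ℝ) < (c:ℝ)*(4*(m:ℝ)-1) by push_cast; linarith
        · exact_mod_cast show (c:ℝ)*(4*(m:ℝ)-1) < ((-8*m^2+8*m-2:ℤ):ℝ) by push_cast; linarith
      omega
    have hcr : (c:ℝ) = -(2*(m:ℝ)) := by exact_mod_cast hc
    rw [hcr] at hb1 hb2
    rcases lt_trichotomy t (8*(m:ℝ)^2-1) with hlt|heq|hgt
    · exact h2 ⟨hc, ⟨by linarith, hlt⟩⟩
    · exact ht (8*m^2-1) (by push_cast; linarith)
    · exact hz2 (Gg_gap hmr ⟨by rw [hcr]; linarith, by rw [hcr]; linarith⟩)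
  -- (3,3)
  · refine no_c m c (-2) 2 (-4*m) (4*m) hm (by omega) (by nlinarith) (by nlinarith) ?_ ?_
    · exact_mod_cast show ((-4*m:ℤ):ℝ) < (c:ℝ)*(4*(m:ℝ)-1) by push_cast; linarith
    · exact_mod_cast show (c:ℝ)*(4*(m:ℝ)-1) < ((4*m:ℤ):ℝ) by push_cast; linarith
  -- (3,4)
  · refine no_c m c (2*m) (2*m+2) (8*m^2-2*m) (8*m^2+4*m-2) hm (by omega) (by nlinarith) (by nlinarith) ?_ ?_
    · exact_mod_cast show ((8*m^2-2*m:ℤ):ℝ) < (c:ℝ)*(4*(m:ℝ)-1) by push_cast; linarith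
    · exact_mod_cast show (c:ℝ)*(4*(m:ℝ)-1) < ((8*m^2+4*m-2:ℤ):ℝ) by push_cast; linarith
  -- (4,1)
  · refine no_c m c (-4*m-2) (-4*m) (-16*m^2-4*m+2) (-16*m^2) hm (by omega) (by nlinarith) (by nlinarith) ?_ ?_
    · exact_mod_cast show ((-16*m^2-4*m+2:ℤ):ℝ) < (c:ℝ)*(4*(m:ℝ)-1) by push_cast; linarith
    · exact_mod_cast show (c:ℝ)*(4*(m:ℝ)-1) < ((-16*m^2:ℤ):ℝ) by push_cast; linarith
  -- (4,2): c = -4m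
  · have hc : c = -(4*m) := by
      have : c = -4*m := by
        refine c_eq m c (-4*m) (-16*m^2+m+2) (-16*m^2+6*m-2) hm (by omega) (by nlinarith) (by nlinarith) ?_ ?_
        · exact_mod_cast show ((-16*m^2+m+2:ℤ):ℝ) < (c:ℝ)*(4*(m:ℝ)-1) by push_cast; linarith
        · exact_mod_cast show (c:ℝ)*(4*(m:ℝ)-1) < ((-16*m^2+6*m-2:ℤ):ℝ) by push_cast; linarith
      omega
    exact h4 ⟨hc, ⟨ha1, ha2⟩⟩
  -- (4,3)
  · refine no_c m c (-2*m-2) (-2*m) (-8*m^2-4*m+2) (-8*m^2+2*m) hm (by omega) (by nlinarith) (by nlinarith) ?_ ?_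
    · exact_mod_cast show ((-8*m^2-4*m+2:ℤ):ℝ) < (c:ℝ)*(4*(m:ℝ)-1) by push_cast; linarith
    · exact_mod_cast show (c:ℝ)*(4*(m:ℝ)-1) < ((-8*m^2+2*m:ℤ):ℝ) by push_cast; linarith
  -- (4,4)
  · refine no_c m c (-2) 2 (-2*m+2) (2*m-2) hm (by omega) (by nlinarith) (by nlinarith) ?_ ?_
    · exact_mod_cast show ((-2*m+2:ℤ):ℝ) < (c:ℝ)*(4*(m:ℝ)-1) by push_cast; linarith
    · exact_mod_cast show (c:ℝ)*(4*(m:ℝ)-1) < ((2*m-2:ℤ):ℝ) by push_cast; linarith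

lemma gchar (n : ℕ) (hn : 3 ≤ n) (x : ℝ) :
    gfun n x = Gg (2^(n-2)) (x * ((2:ℝ)^n - 1) / π) := by
  have hπ : (0:ℝ) < π := Real.pi_pos
  set μ : ℝ := (2:ℝ)^(n-2) with hμ
  have hμ2 : (2:ℝ) ≤ μ := by
    have h := pow_le_pow_right₀ (by norm_num : (1:ℝ) ≤ 2) (by omega : 1 ≤ n-2)
    rw [hμ]; simpa using h
  have e1 : (2:ℝ)^(n-1) = 2*μ := by
    rw [show n-1 = (n-2)+1 by omega, pow_succ, hμ]; ring
  have e2 : (2:ℝ)^n = 4*μ := by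
    rw [show n = (n-2)+2 by omega, pow_add, hμ]; ring
  have hK : (0:ℝ) < 4*μ-1 := by linarith
  have hKne : (4*μ-1) ≠ 0 := ne_of_gt hK
  have hcast : ((2^(n-2) : ℤ) : ℝ) = μ := by rw [hμ]; push_cast; ring
  obtain ⟨τ, hx⟩ : ∃ τ : ℝ, x = τ*π/(4*μ-1) := ⟨x*(4*μ-1)/π, by field_simp⟩
  have hArg : x * ((2:ℝ)^n - 1) / π = τ := by rw [hx, e2]; field_simp
  rw [hArg, hx]
  have en1 : -(bN n) = (-(4*μ))*π/(4*μ-1) := by unfold bN aN; rw [e1, e2]; ring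
  have en2 : -(aN n) = (-(2*μ))*π/(4*μ-1) := by unfold aN; rw [e1, e2]; ring
  have en3 : cN n = (8*μ^2-4*μ)*π/(4*μ-1) := by unfold cN; rw [e1, e2]; ring
  have en4 : aN n/2 + 2^(n-1)*π = (8*μ^2-μ)*π/(4*μ-1) := by
    unfold aN; rw [e1, e2, div_div, div_add' _ _ _ (mul_ne_zero hKne two_ne_zero),
      div_eq_div_iff (mul_ne_zero hKne two_ne_zero) hKne]; ring
  have en5 : eN n/2 + 2^(n-1)*π = (8*μ^2-1)*π/(4*μ-1) := by
    unfold eN; rw [e1, e2]; field_simp; ring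
  have en6 : dN n = (8*μ^2)*π/(4*μ-1) := by unfold dN aN; rw [e1, e2]; ring
  have en7 : aN n/2 = μ*π/(4*μ-1) := by unfold aN; rw [e1, e2]; ring
  have en8 : eN n/2 = (2*μ-1)*π/(4*μ-1) := by unfold eN; rw [e2]; ring
  have en9 : aN n = (2*μ)*π/(4*μ-1) := by unfold aN; rw [e1, e2]; try ring
  have en10 : eN n = (4*μ-2)*π/(4*μ-1) := by unfold eN; rw [e2]; try ring
  have en11 : aN n + 2^n*π = (16*μ^2-2*μ)*π/(4*μ-1) := by
    unfold aN; rw [e1, e2, div_add' _ _ _ hKne]; ring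
  have en12 : eN n + 2^n*π = (16*μ^2-2)*π/(4*μ-1) := by
    unfold eN; rw [e2]; field_simp; ring
  have hle : ∀ a b : ℝ, (a*π/(4*μ-1) ≤ b*π/(4*μ-1)) ↔ a ≤ b := by
    intro a b
    rw [div_le_div_iff_of_pos_right hK, mul_le_mul_iff_of_pos_right hπ]
  unfold gfun Gg
  rw [hcast, en4, en5, en11, en12]
  rw [en1, en2, en3, en6, en7, en8, en9, en10]
  simp only [mem_union, mem_Icc, hle]

/-- for every odd integer `q`,
`Σ_{j≥0} g_n(2^j ξ) g_n(2^j(ξ + 2qπ)) = 0` for a.e. `ξ ∈ ℝ`. -/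
theorem gfun_tq_eq_zero (n : ℕ) (hn : 3 ≤ n) (q : ℤ) (hq : Odd q) :
    ∀ᵐ ξ ∂(volume : Measure ℝ),
      ∑' j : ℕ, gfun n ((2 : ℝ) ^ j * ξ) * gfun n ((2 : ℝ) ^ j * (ξ + 2 * (q : ℝ) * π)) = 0 := by
  have hπ : (0:ℝ) < π := Real.pi_pos
  have hπne : π ≠ 0 := ne_of_gt hπ
  have h2n : (0:ℝ) < (2:ℝ)^n - 1 := by
    have : (2:ℝ)^0 < 2^n := pow_lt_pow_right₀ (by norm_num) (by omega)
    simp at this; linarith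
  -- the main pointwise computation, valid outside a null set
  have main : ∀ ξ : ℝ, (∀ (j:ℕ) (k:ℤ), (2:ℝ)^j * (ξ * ((2:ℝ)^n - 1) / π) ≠ (k:ℝ)) →
      (∑' j : ℕ, gfun n ((2 : ℝ) ^ j * ξ) * gfun n ((2 : ℝ) ^ j * (ξ + 2 * (q : ℝ) * π))) = 0 := by
    intro ξ hgood
    set m : ℤ := 2^(n-2) with hm
    have hm2 : (2:ℤ) ≤ m := by
      have h := pow_le_pow_right₀ (by norm_num : (1:ℤ) ≤ 2) (by omega : 1 ≤ n-2)
      rw [hm]; simpa using h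
    set σ : ℝ := ξ * ((2:ℝ)^n - 1) / π with hσdef
    have hmr : (m:ℝ) = (2:ℝ)^(n-2) := by rw [hm]; push_cast; ring
    have e2r : (2:ℝ)^n = 4*(2:ℝ)^(n-2) := by
      have h : n = (n-2)+2 := by omega
      calc (2:ℝ)^n = 2^((n-2)+2) := by rw [← h]
        _ = 4*(2:ℝ)^(n-2) := by rw [pow_add]; ring
    have e1r : (2:ℝ)^(n-1) = 2*(2:ℝ)^(n-2) := by
      have h : n-1 = (n-2)+1 := by omega
      calc (2:ℝ)^(n-1) = 2^((n-2)+1) := by rw [← h]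
        _ = 2*(2:ℝ)^(n-2) := by rw [pow_succ]; ring
    have hpow1 : (2:ℤ)^(n-1) = 2*m := by
      rw [show n-1 = (n-2)+1 by omega, pow_succ, hm]; ring
    have hpow2 : (2:ℤ)^n = 4*m := by
      rw [show n = (n-2)+2 by omega, pow_add, hm]; ring
    have hqne : q ≠ 0 := by rintro rfl; simp [Int.not_odd_iff_even] at hq
    have hterm : ∀ j : ℕ,
        gfun n ((2:ℝ)^j * ξ) * gfun n ((2:ℝ)^j * (ξ + 2*(q:ℝ)*π)) =
        (if (2:ℤ)^(j+1)*q = 2*m ∧ (2:ℝ)^j*σ ∈ Ioo ((m:ℝ)) (2*(m:ℝ)-1) then 1/2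
         else if (2:ℤ)^(j+1)*q = -(2*m) ∧ (2:ℝ)^j*σ ∈ Ioo (8*(m:ℝ)^2-m) (8*(m:ℝ)^2-1) then 1/2
         else if (2:ℤ)^(j+1)*q = 4*m ∧ (2:ℝ)^j*σ ∈ Ioo (2*(m:ℝ)) (4*(m:ℝ)-2) then -(1/2)
         else if (2:ℤ)^(j+1)*q = -(4*m) ∧ (2:ℝ)^j*σ ∈ Ioo (16*(m:ℝ)^2-2*m) (16*(m:ℝ)^2-2) then -(1/2)
         else 0) := by
      intro j
      have hc0 : (2:ℤ)^(j+1)*q ≠ 0 := mul_ne_zero (pow_ne_zero _ two_ne_zero) hqne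
      have hce : ((2:ℤ)^(j+1)*q) % 2 = 0 := by
        rw [show (2:ℤ)^(j+1)*q = 2*(2^j*q) by rw [pow_succ]; ring]
        exact Int.mul_emod_right 2 _
      have a1 : ((2:ℝ)^j * ξ) * ((2:ℝ)^n - 1)/π = (2:ℝ)^j * σ := by
        rw [hσdef]; ring
      have a2 : ((2:ℝ)^j * (ξ + 2*(q:ℝ)*π)) * ((2:ℝ)^n - 1)/π
          = (2:ℝ)^j*σ + (((2:ℤ)^(j+1)*q : ℤ):ℝ)*(4*(m:ℝ)-1) := by
        rw [hσdef, hmr]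
        push_cast
        rw [e2r]
        field_simp
        ring
      simp only [gchar n hn]
      rw [← hm, a1, a2, Gg_key m ((2:ℤ)^(j+1)*q) hm2 hc0 hce _ (fun k => hgood j k)]
    by_cases hq1 : q = 1
    · subst hq1
      have key1 : ∀ j : ℕ, j ≠ n-2 → j ≠ n-1 →
          gfun n ((2:ℝ)^j * ξ) * gfun n ((2:ℝ)^j * (ξ + 2*((1:ℤ):ℝ)*π)) = 0 := by
        intro j hj2 hj1
        have hp : (0:ℤ) < 2^(j+1) := pow_pos (by norm_num) _
        have hA : ¬((2:ℤ)^(j+1)*1 = 2*m ∧ (2:ℝ)^j*σ ∈ Ioo ((m:ℝ)) (2*(m:ℝ)-1)) := by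
          rintro ⟨hc, -⟩
          rw [mul_one, ← hpow1] at hc
          exact hj2 (by have := two_pow_inj hc; omega)
        have hB : ¬((2:ℤ)^(j+1)*1 = -(2*m) ∧ (2:ℝ)^j*σ ∈ Ioo (8*(m:ℝ)^2-m) (8*(m:ℝ)^2-1)) := by
          rintro ⟨hc, -⟩; rw [mul_one] at hc; omega
        have hC : ¬((2:ℤ)^(j+1)*1 = 4*m ∧ (2:ℝ)^j*σ ∈ Ioo (2*(m:ℝ)) (4*(m:ℝ)-2)) := by
          rintro ⟨hc, -⟩
          rw [mul_one, ← hpow2] at hc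
          exact hj1 (by have := two_pow_inj hc; omega)
        have hD : ¬((2:ℤ)^(j+1)*1 = -(4*m) ∧ (2:ℝ)^j*σ ∈ Ioo (16*(m:ℝ)^2-2*m) (16*(m:ℝ)^2-2)) := by
          rintro ⟨hc, -⟩; rw [mul_one] at hc; omega
        rw [hterm j, if_neg hA, if_neg hB, if_neg hC, if_neg hD]
      rw [tsum_eq_sum (s := ({n-2, n-1} : Finset ℕ)) (fun j hj => by
        simp only [Finset.mem_insert, Finset.mem_singleton] at hj
        push_neg at hj
        exact key1 j hj.1 hj.2)]
      rw [Finset.sum_pair (show (n-2:ℕ) ≠ n-1 by omega), hterm (n-2), hterm (n-1)]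
      have hcA : (2:ℤ)^(n-2+1)*1 = 2*m := by
        rw [mul_one, ← hpow1]; congr 1; omega
      have hcB : (2:ℤ)^(n-1+1)*1 = 4*m := by
        rw [mul_one, ← hpow2]; congr 1; omega
      have hp1 : (0:ℤ) < 2^(n-2+1) := pow_pos (by norm_num) _
      have hp2 : (0:ℤ) < 2^(n-1+1) := pow_pos (by norm_num) _
      have hcB1 : ¬((2:ℤ)^(n-1+1)*1 = 2*m) := by
        rw [mul_one, ← hpow1]; intro h; have := two_pow_inj h; omega
      have hcB2 : ¬((2:ℤ)^(n-1+1)*1 = -(2*m)) := by rw [mul_one]; omega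
      have hcA3 : ¬((2:ℤ)^(n-2+1)*1 = 4*m) := by
        rw [mul_one, ← hpow2]; intro h; have := two_pow_inj h; omega
      have hcA2 : ¬((2:ℤ)^(n-2+1)*1 = -(2*m)) := by rw [mul_one]; omega
      have hcA4 : ¬((2:ℤ)^(n-2+1)*1 = -(4*m)) := by rw [mul_one]; omega
      have hcB4 : ¬((2:ℤ)^(n-1+1)*1 = -(4*m)) := by rw [mul_one]; omega
      by_cases hP : (2:ℝ)^(n-2)*σ ∈ Ioo ((m:ℝ)) (2*(m:ℝ)-1)
      · have hP' : (2:ℝ)^(n-1)*σ ∈ Ioo (2*(m:ℝ)) (4*(m:ℝ)-2) := by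
          rw [e1r]
          exact ⟨by have := hP.1; nlinarith, by have := hP.2; nlinarith⟩
        rw [if_pos ⟨hcA, hP⟩, if_neg (fun h => hcB1 h.1), if_neg (fun h => hcB2 h.1),
          if_pos ⟨hcB, hP'⟩]
        norm_num
      · have hP' : ¬((2:ℝ)^(n-1)*σ ∈ Ioo (2*(m:ℝ)) (4*(m:ℝ)-2)) := by
          intro h
          rw [e1r] at h
          exact hP ⟨by have := h.1; nlinarith, by have := h.2; nlinarith⟩
        rw [if_neg (fun h => hP h.2), if_neg (fun h => hcA2 h.1), if_neg (fun h => hcA3 h.1),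
          if_neg (fun h => hcA4 h.1), if_neg (fun h => hcB1 h.1), if_neg (fun h => hcB2 h.1),
          if_neg (fun h => hP' h.2), if_neg (fun h => hcB4 h.1)]
        norm_num
    · by_cases hqm1 : q = -1
      · subst hqm1
        have key1 : ∀ j : ℕ, j ≠ n-2 → j ≠ n-1 →
            gfun n ((2:ℝ)^j * ξ) * gfun n ((2:ℝ)^j * (ξ + 2*((-1:ℤ):ℝ)*π)) = 0 := by
          intro j hj2 hj1
          have hp : (0:ℤ) < 2^(j+1) := pow_pos (by norm_num) _
          have hA : ¬((2:ℤ)^(j+1)*(-1) = 2*m ∧ (2:ℝ)^j*σ ∈ Ioo ((m:ℝ)) (2*(m:ℝ)-1)) := by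
            rintro ⟨hc, -⟩; omega
          have hB : ¬((2:ℤ)^(j+1)*(-1) = -(2*m) ∧
              (2:ℝ)^j*σ ∈ Ioo (8*(m:ℝ)^2-m) (8*(m:ℝ)^2-1)) := by
            rintro ⟨hc, -⟩
            have hc' : (2:ℤ)^(j+1) = 2^(n-1) := by rw [hpow1]; omega
            exact hj2 (by have := two_pow_inj hc'; omega)
          have hC : ¬((2:ℤ)^(j+1)*(-1) = 4*m ∧ (2:ℝ)^j*σ ∈ Ioo (2*(m:ℝ)) (4*(m:ℝ)-2)) := by
            rintro ⟨hc, -⟩; omega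
          have hD : ¬((2:ℤ)^(j+1)*(-1) = -(4*m) ∧
              (2:ℝ)^j*σ ∈ Ioo (16*(m:ℝ)^2-2*m) (16*(m:ℝ)^2-2)) := by
            rintro ⟨hc, -⟩
            have hc' : (2:ℤ)^(j+1) = 2^n := by rw [hpow2]; omega
            exact hj1 (by have := two_pow_inj hc'; omega)
          rw [hterm j, if_neg hA, if_neg hB, if_neg hC, if_neg hD]
        rw [tsum_eq_sum (s := ({n-2, n-1} : Finset ℕ)) (fun j hj => by
          simp only [Finset.mem_insert, Finset.mem_singleton] at hj
          push_neg at hj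
          exact key1 j hj.1 hj.2)]
        rw [Finset.sum_pair (show (n-2:ℕ) ≠ n-1 by omega), hterm (n-2), hterm (n-1)]
        have hp1 : (0:ℤ) < 2^(n-2+1) := pow_pos (by norm_num) _
        have hp2 : (0:ℤ) < 2^(n-1+1) := pow_pos (by norm_num) _
        have hcA : (2:ℤ)^(n-2+1)*(-1) = -(2*m) := by
          rw [← hpow1, show n-2+1 = n-1 by omega]; ring
        have hcB : (2:ℤ)^(n-1+1)*(-1) = -(4*m) := by
          rw [← hpow2, show n-1+1 = n by omega]; ring
        have hcA1 : ¬((2:ℤ)^(n-2+1)*(-1) = 2*m) := by omega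
        have hcA3 : ¬((2:ℤ)^(n-2+1)*(-1) = 4*m) := by omega
        have hcB1 : ¬((2:ℤ)^(n-1+1)*(-1) = 2*m) := by omega
        have hcB3 : ¬((2:ℤ)^(n-1+1)*(-1) = 4*m) := by omega
        have hcB2 : ¬((2:ℤ)^(n-1+1)*(-1) = -(2*m)) := by
          intro h
          have hc' : (2:ℤ)^(n-1+1) = 2^(n-1) := by rw [hpow1]; omega
          have := two_pow_inj hc'; omega
        have hcA4 : ¬((2:ℤ)^(n-2+1)*(-1) = -(4*m)) := by
          intro h
          have hc' : (2:ℤ)^(n-2+1) = 2^n := by rw [hpow2]; omega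
          have := two_pow_inj hc'; omega
        by_cases hP : (2:ℝ)^(n-2)*σ ∈ Ioo (8*(m:ℝ)^2-m) (8*(m:ℝ)^2-1)
        · have hP' : (2:ℝ)^(n-1)*σ ∈ Ioo (16*(m:ℝ)^2-2*m) (16*(m:ℝ)^2-2) := by
            rw [e1r]
            exact ⟨by have := hP.1; nlinarith, by have := hP.2; nlinarith⟩
          rw [if_neg (fun h => hcA1 h.1), if_pos ⟨hcA, hP⟩, if_neg (fun h => hcB1 h.1),
            if_neg (fun h => hcB2 h.1), if_neg (fun h => hcB3 h.1), if_pos ⟨hcB, hP'⟩]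
          norm_num
        · have hP' : ¬((2:ℝ)^(n-1)*σ ∈ Ioo (16*(m:ℝ)^2-2*m) (16*(m:ℝ)^2-2)) := by
            intro h
            rw [e1r] at h
            exact hP ⟨by have := h.1; nlinarith, by have := h.2; nlinarith⟩
          rw [if_neg (fun h => hcA1 h.1), if_neg (fun h => hP h.2), if_neg (fun h => hcA3 h.1),
            if_neg (fun h => hcA4 h.1), if_neg (fun h => hcB1 h.1), if_neg (fun h => hcB2 h.1),
            if_neg (fun h => hcB3 h.1), if_neg (fun h => hP' h.2)]
          norm_num
      · -- |q| ≥ 3 : every term vanishes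
        have key1 : ∀ j : ℕ,
            gfun n ((2:ℝ)^j * ξ) * gfun n ((2:ℝ)^j * (ξ + 2*(q:ℝ)*π)) = 0 := by
          intro j
          have hp : (0:ℤ) < 2^(j+1) := pow_pos (by norm_num) _
          have hdvd : ∀ b : ℕ, (2:ℤ)^(j+1)*q = 2^b ∨ (2:ℤ)^(j+1)*q = -(2^b) → False := by
            rintro b (h | h)
            · have : q ∣ (2:ℤ)^b := ⟨2^(j+1), by rw [← h]; ring⟩
              rcases odd_dvd_pow_two q b hq this with rfl | rfl
              · exact hq1 rfl
              · have : (0:ℤ) < 2^b := pow_pos (by norm_num) _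
                omega
            · have : q ∣ (2:ℤ)^b := ⟨-(2^(j+1)), by rw [show (2:ℤ)^b = -((2:ℤ)^(j+1)*q) by omega]; ring⟩
              rcases odd_dvd_pow_two q b hq this with rfl | rfl
              · have : (0:ℤ) < 2^b := pow_pos (by norm_num) _
                omega
              · exact hqm1 rfl
          have hA : ¬((2:ℤ)^(j+1)*q = 2*m ∧ (2:ℝ)^j*σ ∈ Ioo ((m:ℝ)) (2*(m:ℝ)-1)) := by
            rintro ⟨hc, -⟩; exact hdvd (n-1) (Or.inl (by rw [hpow1]; omega))
          have hB : ¬((2:ℤ)^(j+1)*q = -(2*m) ∧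
              (2:ℝ)^j*σ ∈ Ioo (8*(m:ℝ)^2-m) (8*(m:ℝ)^2-1)) := by
            rintro ⟨hc, -⟩; exact hdvd (n-1) (Or.inr (by rw [hpow1]; omega))
          have hC : ¬((2:ℤ)^(j+1)*q = 4*m ∧ (2:ℝ)^j*σ ∈ Ioo (2*(m:ℝ)) (4*(m:ℝ)-2)) := by
            rintro ⟨hc, -⟩; exact hdvd n (Or.inl (by rw [hpow2]; omega))
          have hD : ¬((2:ℤ)^(j+1)*q = -(4*m) ∧
              (2:ℝ)^j*σ ∈ Ioo (16*(m:ℝ)^2-2*m) (16*(m:ℝ)^2-2)) := by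
            rintro ⟨hc, -⟩; exact hdvd n (Or.inr (by rw [hpow2]; omega))
          rw [hterm j, if_neg hA, if_neg hB, if_neg hC, if_neg hD]
        calc ∑' j : ℕ, gfun n ((2:ℝ)^j * ξ) * gfun n ((2:ℝ)^j * (ξ + 2*(q:ℝ)*π))
            = ∑' _ : ℕ, (0:ℝ) := tsum_congr key1
          _ = 0 := tsum_zero
  -- null set argument
  have hnull : volume (⋃ (j : ℕ), ⋃ (k : ℤ),
      {ξ : ℝ | (2:ℝ)^j * (ξ * ((2:ℝ)^n - 1) / π) = (k:ℝ)}) = 0 := by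
    refine measure_iUnion_null fun j => measure_iUnion_null fun k => ?_
    have h2j : (0:ℝ) < (2:ℝ)^j := pow_pos (by norm_num) _
    refine measure_mono_null (fun ξ hξ => ?_)
      (measure_singleton ((k:ℝ)*π/((2:ℝ)^j * ((2:ℝ)^n-1))))
    simp only [mem_setOf_eq] at hξ
    simp only [mem_singleton_iff]
    field_simp at hξ ⊢
    linarith
  rw [ae_iff]
  refine measure_mono_null (fun ξ hξ => ?_) hnull
  simp only [mem_setOf_eq] at hξ
  by_contra hg
  apply hξ
  apply main
  intro j k heq
  exact hg (mem_iUnion.mpr ⟨j, mem_iUnion.mpr ⟨k, heq⟩⟩)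
end

section
/- For each integer n ≥ 3, 𝓔(ψ_n) = {0, 2^{n−2}, −2^{n−2}, 2^{n−1}, −2^{n−1}}; consequently every element of 𝓔(ψ_n) is divisible by 2^{n−2} and 2^{n−2} ∈ 𝓔(ψ_n) is not divisible by 2^{n−1}. -/
open MeasureTheory Real Set
open scoped Classical

/-- The Fourier transform `ψ̂_n` of the wavelet `ψ_n`: equal to `1`, `1/√2`, `−1/√2`
on the pieces of `F_n` and `0` elsewhere. -/
noncomputable def psihat (n : ℕ) : ℝ → ℂ := fun ξ => ((gfun n ξ : ℝ) : ℂ)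

noncomputable def mm (n : ℕ) : ℝ := 2 ^ (n-2)
noncomputable def uu (n : ℕ) : ℝ := π / (2 ^ n - 1)

lemma mm_eq (n : ℕ) : mm n = 2 ^ (n-2) := rfl

lemma psihat_ne_iff (n : ℕ) (ξ : ℝ) :
    psihat n ξ ≠ 0 ↔ ξ ∈ (Icc (-(bN n)) (-(aN n)) ∪ Icc (cN n) (aN n / 2 + 2 ^ (n - 1) * π) ∪
      Icc (eN n / 2 + 2 ^ (n - 1) * π) (dN n)) ∪
      (Icc (aN n / 2) (eN n / 2) ∪ Icc (aN n) (eN n) ∪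
      Icc (aN n / 2 + 2 ^ (n - 1) * π) (eN n / 2 + 2 ^ (n - 1) * π)) ∪
      Icc (aN n + 2 ^ n * π) (eN n + 2 ^ n * π) := by
  have hs : Real.sqrt 2 ≠ 0 := by positivity
  unfold psihat gfun
  split_ifs with h1 h2 h3 <;>
    simp only [ne_eq, Complex.ofReal_eq_zero, Set.mem_union, neg_eq_zero, div_eq_zero_iff,
      one_ne_zero, false_or, one_div, inv_eq_zero] at * <;>
    tauto

lemma hm2 (n : ℕ) (hn : 3 ≤ n) : 2 ≤ mm n := by
  unfold mm
  calc (2:ℝ) = 2^1 := by norm_num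
  _ ≤ 2^(n-2) := by apply pow_le_pow_right₀ (by norm_num); omega

lemma pow_n_eq (n : ℕ) (hn : 3 ≤ n) : (2:ℝ)^n = 4 * mm n := by
  unfold mm
  conv_lhs => rw [show n = (n-2)+2 by omega]
  rw [pow_add]; ring

lemma pow_n1_eq (n : ℕ) (hn : 3 ≤ n) : (2:ℝ)^(n-1) = 2 * mm n := by
  unfold mm
  conv_lhs => rw [show n - 1 = (n-2)+1 by omega]
  rw [pow_add]; ring

lemma hD (n : ℕ) (hn : 3 ≤ n) : (2:ℝ)^n - 1 = 4 * mm n - 1 := by rw [pow_n_eq n hn]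

lemma hDne (n : ℕ) (hn : 3 ≤ n) : 4 * mm n - 1 ≠ 0 := by
  have := hm2 n hn; intro h; nlinarith

lemma u_pos (n : ℕ) (hn : 3 ≤ n) : 0 < uu n := by
  unfold uu
  apply div_pos pi_pos
  rw [hD n hn]; have := hm2 n hn; nlinarith

lemma pi_eq (n : ℕ) (hn : 3 ≤ n) : π = (4 * mm n - 1) * uu n := by
  unfold uu; rw [hD n hn]
  rw [mul_comm, div_mul_cancel₀ _ (hDne n hn)]

lemma pi_eq' (n : ℕ) (hn : 3 ≤ n) : π = (4 * (2:ℝ)^(n-2) - 1) * uu n := by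
  rw [pi_eq n hn, mm_eq]

lemma aN_eq (n : ℕ) (hn : 3 ≤ n) : aN n = (2 * mm n) * uu n := by
  unfold aN uu; rw [hD n hn, pow_n1_eq n hn]; ring

lemma bN_eq (n : ℕ) (hn : 3 ≤ n) : bN n = (4 * mm n) * uu n := by
  unfold bN; rw [aN_eq n hn]; ring

lemma cN_eq (n : ℕ) (hn : 3 ≤ n) : cN n = (8 * mm n^2 - 4 * mm n) * uu n := by
  unfold cN uu; rw [hD n hn, pow_n1_eq n hn, pow_n_eq n hn]; ring

lemma dN_eq (n : ℕ) (hn : 3 ≤ n) : dN n = (8 * mm n^2) * uu n := by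
  unfold dN; rw [aN_eq n hn, pow_n_eq n hn]; ring

lemma eN_eq (n : ℕ) (hn : 3 ≤ n) : eN n = (4 * mm n - 2) * uu n := by
  unfold eN uu; rw [hD n hn, pow_n_eq n hn]; ring

lemma comp1 (n : ℕ) (hn : 3 ≤ n) : aN n / 2 + 2^(n-1) * π = (8 * mm n^2 - mm n) * uu n := by
  rw [aN_eq n hn, pow_n1_eq n hn, pi_eq n hn]; ring

lemma comp2 (n : ℕ) (hn : 3 ≤ n) : eN n / 2 + 2^(n-1) * π = (8 * mm n^2 - 1) * uu n := by
  rw [eN_eq n hn, pow_n1_eq n hn, pi_eq n hn]; ring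

lemma comp3 (n : ℕ) (hn : 3 ≤ n) : aN n + 2^n * π = (16 * mm n^2 - 2 * mm n) * uu n := by
  rw [aN_eq n hn, pow_n_eq n hn, pi_eq n hn]; ring

lemma comp4 (n : ℕ) (hn : 3 ≤ n) : eN n + 2^n * π = (16 * mm n^2 - 2) * uu n := by
  rw [eN_eq n hn, pow_n_eq n hn, pi_eq n hn]; ring

lemma comp5 (n : ℕ) (hn : 3 ≤ n) : aN n / 2 = mm n * uu n := by rw [aN_eq n hn]; ring

lemma comp6 (n : ℕ) (hn : 3 ≤ n) : eN n / 2 = (2 * mm n - 1) * uu n := by rw [eN_eq n hn]; ring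

lemma support_subset (n : ℕ) (hn : 3 ≤ n) :
    {ξ : ℝ | psihat n ξ ≠ 0} ⊆
      Icc (-((4 * mm n) * uu n)) ((4 * mm n - 2) * uu n) ∪
      Icc ((8 * mm n^2 - 4 * mm n) * uu n) ((8 * mm n^2) * uu n) ∪
      Icc ((16 * mm n^2 - 2 * mm n) * uu n) ((16 * mm n^2 - 2) * uu n) := by
  intro ξ hξ
  rw [mem_setOf_eq, psihat_ne_iff] at hξ
  have hm := hm2 n hn
  have hu := u_pos n hn
  have h2u : 2 * uu n ≤ mm n * uu n := mul_le_mul_of_nonneg_right hm hu.le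
  rw [comp1 n hn, comp2 n hn, comp3 n hn, comp4 n hn, comp5 n hn, comp6 n hn,
    cN_eq n hn, dN_eq n hn, bN_eq n hn, eN_eq n hn, aN_eq n hn] at hξ
  simp only [mem_union, mem_Icc] at hξ ⊢
  rcases hξ with (((h|h)|h)|((h|h)|h))|h
  · exact Or.inl (Or.inl ⟨h.1, by nlinarith [h.2]⟩)
  · exact Or.inl (Or.inr ⟨h.1, by nlinarith [h.2]⟩)
  · exact Or.inl (Or.inr ⟨by nlinarith [h.1], h.2⟩)
  · exact Or.inl (Or.inl ⟨by nlinarith [h.1], by nlinarith [h.2]⟩)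
  · exact Or.inl (Or.inl ⟨by nlinarith [h.1], h.2⟩)
  · exact Or.inl (Or.inr ⟨by nlinarith [h.1], by nlinarith [h.2]⟩)
  · exact Or.inr ⟨h.1, h.2⟩

lemma keyA (M k : ℤ) (hM : 2 ≤ M) (h1 : -(8*M-2) < 2*k*(4*M-1)) (h2 : 2*k*(4*M-1) < 8*M-2) : k = 0 := by
  rcases lt_trichotomy k 0 with h|h|h
  · exfalso
    have h3 : 2*k ≤ -2 := by omega
    nlinarith [mul_le_mul_of_nonneg_right h3 (by linarith : (0:ℤ) ≤ 4*M-1)]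
  · exact h
  · exfalso
    have h3 : 2 ≤ 2*k := by omega
    nlinarith [mul_le_mul_of_nonneg_right h3 (by linarith : (0:ℤ) ≤ 4*M-1)]

lemma keyB (M k : ℤ) (hM : 2 ≤ M) (h1 : 8*M^2-8*M+2 < 2*k*(4*M-1)) (h2 : 2*k*(4*M-1) < 8*M^2+4*M) : k = M := by
  by_contra h
  rcases lt_or_gt_of_ne h with hlt|hgt
  · have h3 : 2*k ≤ 2*(M-1) := by omega
    nlinarith [mul_le_mul_of_nonneg_right h3 (by linarith : (0:ℤ) ≤ 4*M-1)]
  · have h3 : 2*(M+1) ≤ 2*k := by omega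
    nlinarith [mul_le_mul_of_nonneg_right h3 (by linarith : (0:ℤ) ≤ 4*M-1)]

lemma keyC (M k : ℤ) (hM : 2 ≤ M) (h1 : 16*M^2-6*M+2 < 2*k*(4*M-1)) (h2 : 2*k*(4*M-1) < 16*M^2+4*M-2) : k = 2*M := by
  by_contra h
  rcases lt_or_gt_of_ne h with hlt|hgt
  · have h3 : 2*k ≤ 2*(2*M-1) := by omega
    nlinarith [mul_le_mul_of_nonneg_right h3 (by linarith : (0:ℤ) ≤ 4*M-1)]
  · have h3 : 2*(2*M+1) ≤ 2*k := by omega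
    nlinarith [mul_le_mul_of_nonneg_right h3 (by linarith : (0:ℤ) ≤ 4*M-1)]

lemma keyD (M k : ℤ) (hM : 2 ≤ M) (h1 : 8*M^2-2*M < 2*k*(4*M-1)) (h2 : 2*k*(4*M-1) < 8*M^2+4*M-2) : False := by
  rcases le_or_gt k M with h|h
  · have h3 : 2*k ≤ 2*M := by omega
    nlinarith [mul_le_mul_of_nonneg_right h3 (by linarith : (0:ℤ) ≤ 4*M-1)]
  · have h3 : 2*(M+1) ≤ 2*k := by omega
    nlinarith [mul_le_mul_of_nonneg_right h3 (by linarith : (0:ℤ) ≤ 4*M-1)]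

lemma bridgelt (n : ℕ) (hn : 3 ≤ n) (a b : ℤ) (h : (a:ℝ) * uu n < (b:ℝ) * uu n) : a < b := by
  exact_mod_cast lt_of_mul_lt_mul_right h (u_pos n hn).le

lemma pos_union {X Y : Set ℝ} (h : 0 < volume (X ∪ Y)) : 0 < volume X ∨ 0 < volume Y := by
  by_contra hc
  push_neg at hc
  obtain ⟨hx, hy⟩ := hc
  simp only [nonpos_iff_eq_zero] at hx hy
  exact absurd h (by simp [measure_union_null hx hy])

lemma hM2int (n : ℕ) (hn : 3 ≤ n) : (2:ℤ) ≤ 2^(n-2) := by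
  calc (2:ℤ) = 2^1 := by norm_num
  _ ≤ 2^(n-2) := by apply pow_le_pow_right₀ (by norm_num); omega

set_option maxHeartbeats 1000000 in
lemma hard_dir (n : ℕ) (hn : 3 ≤ n) (k : ℤ) (hk : k ∈ specE (psihat n)) :
    k ∈ ({0, 2 ^ (n - 2), -(2 ^ (n - 2)), 2 ^ (n - 1), -(2 ^ (n - 1))} : Set ℤ) := by
  have hm := hm2 n hn
  have hu := u_pos n hn
  have hM2 := hM2int n hn
  have hp21 : (2:ℤ)^(n-1) = 2 * 2^(n-2) := by
    conv_lhs => rw [show n-1 = (n-2)+1 by omega]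
    rw [pow_succ]; ring
  simp only [specE, mem_setOf_eq] at hk
  have hshift : ∀ (a b x : ℝ), x - 2*(k:ℝ)*π ∈ Icc a b →
      x ∈ Icc (a + 2*(k:ℝ)*π) (b + 2*(k:ℝ)*π) := by
    intro a b x hx
    exact ⟨by linarith [hx.1], by linarith [hx.2]⟩
  have hsub : {ξ : ℝ | psihat n ξ ≠ 0 ∧ psihat n (ξ - 2 * (k:ℝ) * π) ≠ 0} ⊆
      (Icc (-((4 * mm n) * uu n)) ((4 * mm n - 2) * uu n) ∩
        Icc (-((4 * mm n) * uu n) + 2*(k:ℝ)*π) ((4 * mm n - 2) * uu n + 2*(k:ℝ)*π)) ∪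
      ((Icc (-((4 * mm n) * uu n)) ((4 * mm n - 2) * uu n) ∩
        Icc ((8 * mm n^2 - 4 * mm n) * uu n + 2*(k:ℝ)*π) ((8 * mm n^2) * uu n + 2*(k:ℝ)*π)) ∪
      ((Icc (-((4 * mm n) * uu n)) ((4 * mm n - 2) * uu n) ∩
        Icc ((16 * mm n^2 - 2 * mm n) * uu n + 2*(k:ℝ)*π) ((16 * mm n^2 - 2) * uu n + 2*(k:ℝ)*π)) ∪
      ((Icc ((8 * mm n^2 - 4 * mm n) * uu n) ((8 * mm n^2) * uu n) ∩
        Icc (-((4 * mm n) * uu n) + 2*(k:ℝ)*π) ((4 * mm n - 2) * uu n + 2*(k:ℝ)*π)) ∪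
      ((Icc ((8 * mm n^2 - 4 * mm n) * uu n) ((8 * mm n^2) * uu n) ∩
        Icc ((8 * mm n^2 - 4 * mm n) * uu n + 2*(k:ℝ)*π) ((8 * mm n^2) * uu n + 2*(k:ℝ)*π)) ∪
      ((Icc ((8 * mm n^2 - 4 * mm n) * uu n) ((8 * mm n^2) * uu n) ∩
        Icc ((16 * mm n^2 - 2 * mm n) * uu n + 2*(k:ℝ)*π) ((16 * mm n^2 - 2) * uu n + 2*(k:ℝ)*π)) ∪
      ((Icc ((16 * mm n^2 - 2 * mm n) * uu n) ((16 * mm n^2 - 2) * uu n) ∩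
        Icc (-((4 * mm n) * uu n) + 2*(k:ℝ)*π) ((4 * mm n - 2) * uu n + 2*(k:ℝ)*π)) ∪
      ((Icc ((16 * mm n^2 - 2 * mm n) * uu n) ((16 * mm n^2 - 2) * uu n) ∩
        Icc ((8 * mm n^2 - 4 * mm n) * uu n + 2*(k:ℝ)*π) ((8 * mm n^2) * uu n + 2*(k:ℝ)*π)) ∪
      (Icc ((16 * mm n^2 - 2 * mm n) * uu n) ((16 * mm n^2 - 2) * uu n) ∩
        Icc ((16 * mm n^2 - 2 * mm n) * uu n + 2*(k:ℝ)*π) ((16 * mm n^2 - 2) * uu n + 2*(k:ℝ)*π))))))))) := by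
    intro ξ hξ
    obtain ⟨h1, h2⟩ := hξ
    have m1 := support_subset n hn h1
    have m2 := support_subset n hn h2
    rcases m1 with (hA|hA)|hA <;> rcases m2 with (hB|hB)|hB
    · exact Or.inl (mem_inter hA (hshift _ _ _ hB))
    · exact Or.inr (Or.inl (mem_inter hA (hshift _ _ _ hB)))
    · exact Or.inr (Or.inr (Or.inl (mem_inter hA (hshift _ _ _ hB))))
    · exact Or.inr (Or.inr (Or.inr (Or.inl (mem_inter hA (hshift _ _ _ hB)))))
    · exact Or.inr (Or.inr (Or.inr (Or.inr (Or.inl (mem_inter hA (hshift _ _ _ hB))))))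
    · exact Or.inr (Or.inr (Or.inr (Or.inr (Or.inr (Or.inl (mem_inter hA (hshift _ _ _ hB)))))))
    · exact Or.inr (Or.inr (Or.inr (Or.inr (Or.inr (Or.inr (Or.inl (mem_inter hA (hshift _ _ _ hB))))))))
    · exact Or.inr (Or.inr (Or.inr (Or.inr (Or.inr (Or.inr (Or.inr (Or.inl (mem_inter hA (hshift _ _ _ hB)))))))))
    · exact Or.inr (Or.inr (Or.inr (Or.inr (Or.inr (Or.inr (Or.inr (Or.inr (mem_inter hA (hshift _ _ _ hB)))))))))
  have hpos := hk.trans_le (measure_mono hsub)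
  clear hsub hk
  simp only [mem_insert_iff, mem_singleton_iff]
  obtain h | hpos := pos_union hpos
  · -- L L' : k = 0
    rw [Set.Icc_inter_Icc, Real.volume_Icc] at h
    have h' := sub_pos.mp (ENNReal.ofReal_pos.mp h)
    have e1 := lt_of_le_of_lt le_sup_left (h'.trans_le inf_le_right)
    have e2 := lt_of_le_of_lt le_sup_right (h'.trans_le inf_le_left)
    have E1 : (-(8*(2:ℤ)^(n-2)-2)) < 2*k*(4*2^(n-2)-1) := by
      refine bridgelt n hn _ _ ?_
      rw [mm_eq n, pi_eq' n hn] at e1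
      push_cast
      linarith
    have E2 : 2*k*(4*(2:ℤ)^(n-2)-1) < 8*2^(n-2)-2 := by
      refine bridgelt n hn _ _ ?_
      rw [mm_eq n, pi_eq' n hn] at e2
      push_cast
      linarith
    exact Or.inl (keyA _ _ hM2 E1 E2)
  obtain h | hpos := pos_union hpos
  · -- L P' : k = -M
    rw [Set.Icc_inter_Icc, Real.volume_Icc] at h
    have h' := sub_pos.mp (ENNReal.ofReal_pos.mp h)
    have e1 := lt_of_le_of_lt le_sup_left (h'.trans_le inf_le_right)
    have e2 := lt_of_le_of_lt le_sup_right (h'.trans_le inf_le_left)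
    have E1 : 8*((2:ℤ)^(n-2))^2-8*(2:ℤ)^(n-2)+2 < 2*(-k)*(4*(2:ℤ)^(n-2)-1) := by
      refine bridgelt n hn _ _ ?_
      rw [mm_eq n, pi_eq' n hn] at e2
      push_cast
      linarith
    have E2 : 2*(-k)*(4*(2:ℤ)^(n-2)-1) < 8*((2:ℤ)^(n-2))^2+4*(2:ℤ)^(n-2) := by
      refine bridgelt n hn _ _ ?_
      rw [mm_eq n, pi_eq' n hn] at e1
      push_cast
      linarith
    have hkk := keyB _ _ hM2 E1 E2
    right; right; left; linarith
  obtain h | hpos := pos_union hpos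
  · -- L Q' : k = -2M
    rw [Set.Icc_inter_Icc, Real.volume_Icc] at h
    have h' := sub_pos.mp (ENNReal.ofReal_pos.mp h)
    have e1 := lt_of_le_of_lt le_sup_left (h'.trans_le inf_le_right)
    have e2 := lt_of_le_of_lt le_sup_right (h'.trans_le inf_le_left)
    have E1 : 16*((2:ℤ)^(n-2))^2-6*(2:ℤ)^(n-2)+2 < 2*(-k)*(4*(2:ℤ)^(n-2)-1) := by
      refine bridgelt n hn _ _ ?_
      rw [mm_eq n, pi_eq' n hn] at e2
      push_cast
      linarith
    have E2 : 2*(-k)*(4*(2:ℤ)^(n-2)-1) < 16*((2:ℤ)^(n-2))^2+4*(2:ℤ)^(n-2)-2 := by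
      refine bridgelt n hn _ _ ?_
      rw [mm_eq n, pi_eq' n hn] at e1
      push_cast
      linarith
    have hkk := keyC _ _ hM2 E1 E2
    right; right; right; right; linarith
  obtain h | hpos := pos_union hpos
  · -- P L' : k = M
    rw [Set.Icc_inter_Icc, Real.volume_Icc] at h
    have h' := sub_pos.mp (ENNReal.ofReal_pos.mp h)
    have e1 := lt_of_le_of_lt le_sup_left (h'.trans_le inf_le_right)
    have e2 := lt_of_le_of_lt le_sup_right (h'.trans_le inf_le_left)
    have E1 : 8*((2:ℤ)^(n-2))^2-8*(2:ℤ)^(n-2)+2 < 2*k*(4*(2:ℤ)^(n-2)-1) := by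
      refine bridgelt n hn _ _ ?_
      rw [mm_eq n, pi_eq' n hn] at e1
      push_cast
      linarith
    have E2 : 2*k*(4*(2:ℤ)^(n-2)-1) < 8*((2:ℤ)^(n-2))^2+4*(2:ℤ)^(n-2) := by
      refine bridgelt n hn _ _ ?_
      rw [mm_eq n, pi_eq' n hn] at e2
      push_cast
      linarith
    have hkk := keyB _ _ hM2 E1 E2
    right; left; linarith
  obtain h | hpos := pos_union hpos
  · -- P P' : k = 0
    rw [Set.Icc_inter_Icc, Real.volume_Icc] at h
    have h' := sub_pos.mp (ENNReal.ofReal_pos.mp h)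
    have e1 := lt_of_le_of_lt le_sup_left (h'.trans_le inf_le_right)
    have e2 := lt_of_le_of_lt le_sup_right (h'.trans_le inf_le_left)
    have E1 : -(4*(2:ℤ)^(n-2)) < 2*k*(4*(2:ℤ)^(n-2)-1) := by
      refine bridgelt n hn _ _ ?_
      rw [mm_eq n, pi_eq' n hn] at e1
      push_cast
      linarith
    have E2 : 2*k*(4*(2:ℤ)^(n-2)-1) < 4*(2:ℤ)^(n-2) := by
      refine bridgelt n hn _ _ ?_
      rw [mm_eq n, pi_eq' n hn] at e2
      push_cast
      linarith
    left; exact keyA _ _ hM2 (by linarith) (by linarith)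
  obtain h | hpos := pos_union hpos
  · -- P Q' : impossible
    rw [Set.Icc_inter_Icc, Real.volume_Icc] at h
    have h' := sub_pos.mp (ENNReal.ofReal_pos.mp h)
    have e1 := lt_of_le_of_lt le_sup_left (h'.trans_le inf_le_right)
    have e2 := lt_of_le_of_lt le_sup_right (h'.trans_le inf_le_left)
    have E1 : 8*((2:ℤ)^(n-2))^2-2*(2:ℤ)^(n-2) < 2*(-k)*(4*(2:ℤ)^(n-2)-1) := by
      refine bridgelt n hn _ _ ?_
      rw [mm_eq n, pi_eq' n hn] at e2
      push_cast
      linarith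
    have E2 : 2*(-k)*(4*(2:ℤ)^(n-2)-1) < 8*((2:ℤ)^(n-2))^2+4*(2:ℤ)^(n-2)-2 := by
      refine bridgelt n hn _ _ ?_
      rw [mm_eq n, pi_eq' n hn] at e1
      push_cast
      linarith
    exact (keyD _ _ hM2 E1 E2).elim
  obtain h | hpos := pos_union hpos
  · -- Q L' : k = 2M
    rw [Set.Icc_inter_Icc, Real.volume_Icc] at h
    have h' := sub_pos.mp (ENNReal.ofReal_pos.mp h)
    have e1 := lt_of_le_of_lt le_sup_left (h'.trans_le inf_le_right)
    have e2 := lt_of_le_of_lt le_sup_right (h'.trans_le inf_le_left)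
    have E1 : 16*((2:ℤ)^(n-2))^2-6*(2:ℤ)^(n-2)+2 < 2*k*(4*(2:ℤ)^(n-2)-1) := by
      refine bridgelt n hn _ _ ?_
      rw [mm_eq n, pi_eq' n hn] at e1
      push_cast
      linarith
    have E2 : 2*k*(4*(2:ℤ)^(n-2)-1) < 16*((2:ℤ)^(n-2))^2+4*(2:ℤ)^(n-2)-2 := by
      refine bridgelt n hn _ _ ?_
      rw [mm_eq n, pi_eq' n hn] at e2
      push_cast
      linarith
    have hkk := keyC _ _ hM2 E1 E2
    right; right; right; left; linarith
  obtain h | h := pos_union hpos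
  · -- Q P' : impossible
    rw [Set.Icc_inter_Icc, Real.volume_Icc] at h
    have h' := sub_pos.mp (ENNReal.ofReal_pos.mp h)
    have e1 := lt_of_le_of_lt le_sup_left (h'.trans_le inf_le_right)
    have e2 := lt_of_le_of_lt le_sup_right (h'.trans_le inf_le_left)
    have E1 : 8*((2:ℤ)^(n-2))^2-2*(2:ℤ)^(n-2) < 2*k*(4*(2:ℤ)^(n-2)-1) := by
      refine bridgelt n hn _ _ ?_
      rw [mm_eq n, pi_eq' n hn] at e1
      push_cast
      linarith
    have E2 : 2*k*(4*(2:ℤ)^(n-2)-1) < 8*((2:ℤ)^(n-2))^2+4*(2:ℤ)^(n-2)-2 := by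
      refine bridgelt n hn _ _ ?_
      rw [mm_eq n, pi_eq' n hn] at e2
      push_cast
      linarith
    exact (keyD _ _ hM2 E1 E2).elim
  · -- Q Q' : k = 0
    rw [Set.Icc_inter_Icc, Real.volume_Icc] at h
    have h' := sub_pos.mp (ENNReal.ofReal_pos.mp h)
    have e1 := lt_of_le_of_lt le_sup_left (h'.trans_le inf_le_right)
    have e2 := lt_of_le_of_lt le_sup_right (h'.trans_le inf_le_left)
    have E1 : -(2*(2:ℤ)^(n-2))+2 < 2*k*(4*(2:ℤ)^(n-2)-1) := by
      refine bridgelt n hn _ _ ?_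
      rw [mm_eq n, pi_eq' n hn] at e1
      push_cast
      linarith
    have E2 : 2*k*(4*(2:ℤ)^(n-2)-1) < 2*(2:ℤ)^(n-2)-2 := by
      refine bridgelt n hn _ _ ?_
      rw [mm_eq n, pi_eq' n hn] at e2
      push_cast
      linarith
    left; exact keyA _ _ hM2 (by linarith) (by linarith)

lemma pow_n1R (n : ℕ) (hn : 3 ≤ n) : (2:ℝ)^(n-1) = 2 * 2^(n-2) := by
  rw [pow_n1_eq n hn, mm_eq]

lemma pow_nR (n : ℕ) (hn : 3 ≤ n) : (2:ℝ)^n = 2 * 2^(n-1) := by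
  conv_lhs => rw [show n = (n-1)+1 by omega]
  rw [pow_succ]; ring

lemma mem_pos (n : ℕ) (k : ℤ) (x y : ℝ) (hxy : x < y)
    (hsub : Icc x y ⊆ {ξ : ℝ | psihat n ξ ≠ 0 ∧ psihat n (ξ - 2*(k:ℝ)*π) ≠ 0}) :
    k ∈ specE (psihat n) := by
  have h0 : 0 < volume (Icc x y) := by
    rw [Real.volume_Icc]; exact ENNReal.ofReal_pos.2 (by linarith)
  simp only [specE, mem_setOf_eq]
  exact h0.trans_le (measure_mono hsub)

lemma mem0 (n : ℕ) (hn : 3 ≤ n) : (0:ℤ) ∈ specE (psihat n) := by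
  have h2u := mul_le_mul_of_nonneg_right (hm2 n hn) (u_pos n hn).le
  apply mem_pos n 0 (aN n) (eN n)
  · rw [aN_eq n hn, eN_eq n hn]
    linarith [u_pos n hn]
  · intro ξ hξ
    constructor
    · rw [psihat_ne_iff]
      simp only [mem_union]
      exact Or.inl (Or.inr (Or.inl (Or.inr hξ)))
    · have hsh : ξ - 2*((0:ℤ):ℝ)*π = ξ := by push_cast; ring
      rw [hsh, psihat_ne_iff]
      simp only [mem_union]
      exact Or.inl (Or.inr (Or.inl (Or.inr hξ)))

lemma memM (n : ℕ) (hn : 3 ≤ n) : ((2:ℤ)^(n-2)) ∈ specE (psihat n) := by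
  have h2u := mul_le_mul_of_nonneg_right (hm2 n hn) (u_pos n hn).le
  apply mem_pos n _ (aN n / 2 + 2^(n-1)*π) (eN n / 2 + 2^(n-1)*π)
  · rw [comp1 n hn, comp2 n hn]
    linarith [u_pos n hn]
  · intro ξ hξ
    simp only [mem_Icc] at hξ
    obtain ⟨h1, h2⟩ := hξ
    constructor
    · rw [psihat_ne_iff]
      simp only [mem_union]
      exact Or.inl (Or.inr (Or.inr ⟨h1, h2⟩))
    · have hsh : ξ - 2*(((2:ℤ)^(n-2) : ℤ):ℝ)*π = ξ - 2^(n-1)*π := by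
        push_cast
        rw [pow_n1R n hn]
      rw [hsh, psihat_ne_iff]
      simp only [mem_union]
      exact Or.inl (Or.inr (Or.inl (Or.inl ⟨by linarith, by linarith⟩)))

lemma memM' (n : ℕ) (hn : 3 ≤ n) : (-((2:ℤ)^(n-2))) ∈ specE (psihat n) := by
  have h2u := mul_le_mul_of_nonneg_right (hm2 n hn) (u_pos n hn).le
  apply mem_pos n _ (aN n / 2) (eN n / 2)
  · rw [comp5 n hn, comp6 n hn]
    linarith [u_pos n hn]
  · intro ξ hξ
    simp only [mem_Icc] at hξ
    obtain ⟨h1, h2⟩ := hξ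
    constructor
    · rw [psihat_ne_iff]
      simp only [mem_union]
      exact Or.inl (Or.inr (Or.inl (Or.inl ⟨h1, h2⟩)))
    · have hsh : ξ - 2*((-((2:ℤ)^(n-2)) : ℤ):ℝ)*π = ξ + 2^(n-1)*π := by
        push_cast
        rw [pow_n1R n hn]; ring
      rw [hsh, psihat_ne_iff]
      simp only [mem_union]
      exact Or.inl (Or.inr (Or.inr ⟨by linarith, by linarith⟩))

lemma mem2M (n : ℕ) (hn : 3 ≤ n) : ((2:ℤ)^(n-1)) ∈ specE (psihat n) := by
  have h2u := mul_le_mul_of_nonneg_right (hm2 n hn) (u_pos n hn).le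
  apply mem_pos n _ (aN n + 2^n*π) (eN n + 2^n*π)
  · rw [comp3 n hn, comp4 n hn]
    linarith [u_pos n hn]
  · intro ξ hξ
    simp only [mem_Icc] at hξ
    obtain ⟨h1, h2⟩ := hξ
    constructor
    · rw [psihat_ne_iff]
      simp only [mem_union]
      exact Or.inr ⟨h1, h2⟩
    · have hsh : ξ - 2*(((2:ℤ)^(n-1) : ℤ):ℝ)*π = ξ - 2^n*π := by
        push_cast
        rw [pow_nR n hn]
      rw [hsh, psihat_ne_iff]
      simp only [mem_union]
      exact Or.inl (Or.inr (Or.inl (Or.inr ⟨by linarith, by linarith⟩)))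

lemma mem2M' (n : ℕ) (hn : 3 ≤ n) : (-((2:ℤ)^(n-1))) ∈ specE (psihat n) := by
  have h2u := mul_le_mul_of_nonneg_right (hm2 n hn) (u_pos n hn).le
  apply mem_pos n _ (aN n) (eN n)
  · rw [aN_eq n hn, eN_eq n hn]
    linarith [u_pos n hn]
  · intro ξ hξ
    simp only [mem_Icc] at hξ
    obtain ⟨h1, h2⟩ := hξ
    constructor
    · rw [psihat_ne_iff]
      simp only [mem_union]
      exact Or.inl (Or.inr (Or.inl (Or.inr ⟨h1, h2⟩)))
    · have hsh : ξ - 2*((-((2:ℤ)^(n-1)) : ℤ):ℝ)*π = ξ + 2^n*π := by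
        push_cast
        rw [pow_nR n hn]; ring
      rw [hsh, psihat_ne_iff]
      simp only [mem_union]
      exact Or.inr ⟨by linarith, by linarith⟩

/-- `𝓔(ψ_n) = {0, ±2^(n-2), ±2^(n-1)}`; consequently every element of
`𝓔(ψ_n)` is divisible by `2^(n-2)`, and `2^(n-2) ∈ 𝓔(ψ_n)` is not divisible by `2^(n-1)`. -/
theorem specE_psi_n (n : ℕ) (hn : 3 ≤ n) :
    specE (psihat n) =
      ({0, 2 ^ (n - 2), -(2 ^ (n - 2)), 2 ^ (n - 1), -(2 ^ (n - 1))} : Set ℤ) ∧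
    (∀ k ∈ specE (psihat n), (2 : ℤ) ^ (n - 2) ∣ k) ∧
    (2 : ℤ) ^ (n - 2) ∈ specE (psihat n) ∧
    ¬ ((2 : ℤ) ^ (n - 1) ∣ (2 : ℤ) ^ (n - 2)) := by
  have hp21 : (2:ℤ)^(n-1) = 2*2^(n-2) := by
    conv_lhs => rw [show n-1 = (n-2)+1 by omega]
    rw [pow_succ]; ring
  have hEq : specE (psihat n) =
      ({0, 2 ^ (n - 2), -(2 ^ (n - 2)), 2 ^ (n - 1), -(2 ^ (n - 1))} : Set ℤ) := by
    apply Subset.antisymm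
    · intro k hk
      exact hard_dir n hn k hk
    · intro k hk
      simp only [mem_insert_iff, mem_singleton_iff] at hk
      rcases hk with rfl|rfl|rfl|rfl|rfl
      exacts [mem0 n hn, memM n hn, memM' n hn, mem2M n hn, mem2M' n hn]
  refine ⟨hEq, ?_, memM n hn, ?_⟩
  · intro k hk
    rw [hEq] at hk
    simp only [mem_insert_iff, mem_singleton_iff] at hk
    rcases hk with rfl|rfl|rfl|rfl|rfl
    · exact dvd_zero _
    · exact dvd_rfl
    · exact dvd_neg.2 dvd_rfl
    · exact ⟨2, by linarith⟩
    · exact dvd_neg.2 ⟨2, by linarith⟩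
  · intro hdvd
    have h1 : (2:ℤ)^(n-1) ≤ 2^(n-2) := Int.le_of_dvd (by positivity) hdvd
    have h2 : (2:ℤ)^(n-2) < 2^(n-1) := by
      apply pow_lt_pow_right₀ (by norm_num) (by omega)
    linarith
end
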